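/- arXiv:1904.03745 — 16 statements merged into one kernel-verified Lean document; each statement's English description precedes it below -/
import Mathlib

section
/- The symmetrized bidisc equals the extended symmetrized bidisc: the set G₂ = {(z₁+z₂, z₁z₂) : z₁, z₂ ∈ 𝔻} coincides with the set G̃₂ = {(β + β̄q, q) : β ∈ ℂ, q ∈ 𝔻, |β| < 1}. -/
open Complex

/-- Any root of z² - (β+β̄q)z + q with |β|<1, |q|<1 lies in the unit disc. -/
lemma root_abs_lt_one (β q z : ℂ) (hβ : ‖β‖ < 1) (hq : ‖q‖ < 1)
    (hz : z * z - (β + (starRingEnd ℂ) β * q) * z + q = 0) : ‖z‖ < 1 := by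
  by_contra h
  push_neg at h
  have heq : z * (z - β) = q * ((starRingEnd ℂ) β * z - 1) := by linear_combination hz
  have habs : ‖z‖ * ‖z - β‖
      = ‖q‖ * ‖(starRingEnd ℂ) β * z - 1‖ := by
    rw [← norm_mul, ← norm_mul, heq]
  have hzβ : z ≠ β := by
    intro hzb
    rw [hzb] at h; linarith
  have hd : 0 < ‖z - β‖ :=
    norm_pos_iff.mpr (sub_ne_zero.mpr hzβ)
  have hineq : ‖(starRingEnd ℂ) β * z - 1‖ ≤ ‖z - β‖ := by
    have hz1 : 1 ≤ Complex.normSq z := by rw [← Complex.sq_norm]; nlinarith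
    have hβ1 : Complex.normSq β ≤ 1 := by
      rw [← Complex.sq_norm]; nlinarith [norm_nonneg β]
    have expand : Complex.normSq (z - β) - Complex.normSq ((starRingEnd ℂ) β * z - 1)
        = (Complex.normSq z - 1) * (1 - Complex.normSq β) := by
      simp only [Complex.normSq_apply, Complex.mul_re, Complex.mul_im, Complex.sub_re,
        Complex.sub_im, Complex.conj_re, Complex.conj_im, Complex.one_re, Complex.one_im]
      ring
    have h1 : Complex.normSq ((starRingEnd ℂ) β * z - 1) ≤ Complex.normSq (z - β) := by
      nlinarith
    rw [Complex.norm_def, Complex.norm_def]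
    exact Real.sqrt_le_sqrt h1
  have ht : 0 ≤ ‖(starRingEnd ℂ) β * z - 1‖ := norm_nonneg _
  have hq0 : 0 ≤ ‖q‖ := norm_nonneg q
  nlinarith [mul_le_mul_of_nonneg_left hineq hq0]

/-- The symmetrized bidisc equals the extended symmetrized bidisc. -/
theorem symmetrized_bidisc_eq_extended :
    {p : ℂ × ℂ | ∃ z₁ z₂ : ℂ, ‖z₁‖ < 1 ∧ ‖z₂‖ < 1 ∧
      p = (z₁ + z₂, z₁ * z₂)} =
    {p : ℂ × ℂ | ∃ β q : ℂ, ‖q‖ < 1 ∧ ‖β‖ < 1 ∧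
      p = (β + (starRingEnd ℂ) β * q, q)} := by
  ext p
  simp only [Set.mem_setOf_eq]
  constructor
  · rintro ⟨z₁, z₂, h1, h2, rfl⟩
    set s : ℂ := z₁ + z₂ with hs
    set q : ℂ := z₁ * z₂ with hqdef
    have ha := norm_nonneg z₁
    have hb := norm_nonneg z₂
    have hqabs : ‖q‖ = ‖z₁‖ * ‖z₂‖ := norm_mul _ _
    have hq : ‖q‖ < 1 := by rw [hqabs]; nlinarith
    have hDpos : (0:ℝ) < 1 - Complex.normSq q := by
      have : Complex.normSq q < 1 := by
        rw [← Complex.sq_norm]; nlinarith [norm_nonneg q]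
      linarith
    set D : ℂ := ((1 - Complex.normSq q : ℝ) : ℂ) with hD
    have hDne : D ≠ 0 := by
      rw [hD]
      exact_mod_cast ne_of_gt hDpos
    set β : ℂ := (s - (starRingEnd ℂ) s * q) / D with hβdef
    have hconjD : (starRingEnd ℂ) D = D := Complex.conj_ofReal _
    have hconjβ : (starRingEnd ℂ) β = ((starRingEnd ℂ) s - s * (starRingEnd ℂ) q) / D := by
      rw [hβdef, map_div₀, map_sub, map_mul, Complex.conj_conj, hconjD]
    have hpc : q * (starRingEnd ℂ) q = (Complex.normSq q : ℂ) := Complex.mul_conj q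
    have hDcast : D = 1 - (Complex.normSq q : ℂ) := by rw [hD]; push_cast; ring
    have hβD : β * D = s - (starRingEnd ℂ) s * q := by
      rw [hβdef]; exact div_mul_cancel₀ _ hDne
    have hβcD : (starRingEnd ℂ) β * D = (starRingEnd ℂ) s - s * (starRingEnd ℂ) q := by
      rw [hconjβ]; exact div_mul_cancel₀ _ hDne
    have hsum : β + (starRingEnd ℂ) β * q = s := by
      have hmul : (β + (starRingEnd ℂ) β * q) * D = s * D := by
        linear_combination hβD + q * hβcD - s * hpc - s * hDcast
      exact mul_right_cancel₀ hDne hmul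
    -- identity s - s̄ q = z₁(1 - |z₂|²) + z₂(1 - |z₁|²)
    have hid : s - (starRingEnd ℂ) s * q
        = z₁ * (1 - (Complex.normSq z₂ : ℂ)) + z₂ * (1 - (Complex.normSq z₁ : ℂ)) := by
      have h1' : z₁ * (starRingEnd ℂ) z₁ = (Complex.normSq z₁ : ℂ) := Complex.mul_conj z₁
      have h2' : z₂ * (starRingEnd ℂ) z₂ = (Complex.normSq z₂ : ℂ) := Complex.mul_conj z₂
      simp only [hs, hqdef, map_add]
      linear_combination (-z₂) * h1' - z₁ * h2'
    have habsnum : ‖s - (starRingEnd ℂ) s * q‖ < 1 - Complex.normSq q := by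
      rw [hid]
      have hns1 : Complex.normSq z₁ ≤ 1 := by
        rw [← Complex.sq_norm]; nlinarith
      have hns2 : Complex.normSq z₂ ≤ 1 := by
        rw [← Complex.sq_norm]; nlinarith
      calc ‖z₁ * (1 - (Complex.normSq z₂ : ℂ)) + z₂ * (1 - (Complex.normSq z₁ : ℂ))‖
          ≤ ‖z₁ * (1 - (Complex.normSq z₂ : ℂ))‖
            + ‖z₂ * (1 - (Complex.normSq z₁ : ℂ))‖ := norm_add_le _ _
        _ = ‖z₁‖ * (1 - Complex.normSq z₂)
            + ‖z₂‖ * (1 - Complex.normSq z₁) := by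
            rw [norm_mul, norm_mul]
            have e2 : ‖1 - (Complex.normSq z₂ : ℂ)‖ = 1 - Complex.normSq z₂ := by
              rw [show (1 - (Complex.normSq z₂ : ℂ)) = (((1 - Complex.normSq z₂ : ℝ)) : ℂ) by
                push_cast; ring, Complex.norm_real, Real.norm_eq_abs, _root_.abs_of_nonneg (by linarith)]
            have e1 : ‖1 - (Complex.normSq z₁ : ℂ)‖ = 1 - Complex.normSq z₁ := by
              rw [show (1 - (Complex.normSq z₁ : ℂ)) = (((1 - Complex.normSq z₁ : ℝ)) : ℂ) by
                push_cast; ring, Complex.norm_real, Real.norm_eq_abs, _root_.abs_of_nonneg (by linarith)]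
            rw [e1, e2]
        _ < 1 - Complex.normSq q := by
            have hnq : Complex.normSq q = Complex.normSq z₁ * Complex.normSq z₂ :=
              Complex.normSq_mul _ _
            rw [hnq, ← Complex.sq_norm z₁, ← Complex.sq_norm z₂]
            nlinarith [mul_pos (mul_pos (sub_pos.mpr h1) (sub_pos.mpr h2))
              (sub_pos.mpr (show ‖z₁‖ * ‖z₂‖ < 1 by nlinarith))]
    have hβabs : ‖β‖ < 1 := by
      rw [hβdef, norm_div, hD, Complex.norm_real, Real.norm_eq_abs, abs_of_pos hDpos, div_lt_one hDpos]
      exact habsnum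
    exact ⟨β, q, hq, hβabs, by rw [hsum]⟩
  · rintro ⟨β, q, hq, hβ, rfl⟩
    set s : ℂ := β + (starRingEnd ℂ) β * q with hs
    obtain ⟨d, hd⟩ : ∃ d : ℂ, d ^ 2 = s ^ 2 - 4 * q :=
      IsAlgClosed.exists_pow_nat_eq _ (n := 2) (by norm_num)
    set z₁ : ℂ := (s + d) / 2 with hz₁
    set z₂ : ℂ := (s - d) / 2 with hz₂
    have hsum : z₁ + z₂ = s := by rw [hz₁, hz₂]; ring
    have hprod : z₁ * z₂ = q := by
      rw [hz₁, hz₂]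
      linear_combination (-(1:ℂ)/4) * hd
    have hr1 : z₁ * z₁ - s * z₁ + q = 0 := by
      rw [hz₁]
      linear_combination ((1:ℂ)/4) * hd
    have hr2 : z₂ * z₂ - s * z₂ + q = 0 := by
      rw [hz₂]
      linear_combination ((1:ℂ)/4) * hd
    refine ⟨z₁, z₂, root_abs_lt_one β q z₁ hβ hq (by rw [← hs]; exact hr1),
      root_abs_lt_one β q z₂ hβ hq (by rw [← hs]; exact hr2), ?_⟩
    rw [hsum, hprod]
end

section
/- The point (5/2, 5/4, 1/2) belongs to G̃₃ but not to G₃; hence the symmetrized tridisc G₃ is a proper subset of the extended symmetrized tridisc G̃₃. -/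
/-- The symmetrized tridisc. -/
def G3 : Set (ℂ × ℂ × ℂ) :=
  {p | ∃ z₁ z₂ z₃ : ℂ, ‖z₁‖ < 1 ∧ ‖z₂‖ < 1 ∧ ‖z₃‖ < 1 ∧
    p = (z₁ + z₂ + z₃, z₁ * z₂ + z₂ * z₃ + z₃ * z₁, z₁ * z₂ * z₃)}

/-- The extended symmetrized tridisc. -/
def G3ext : Set (ℂ × ℂ × ℂ) :=
  {p | ∃ β₁ β₂ q : ℂ, ‖q‖ < 1 ∧ ‖β₁‖ + ‖β₂‖ < 3 ∧
    p = (β₁ + (starRingEnd ℂ) β₂ * q, β₂ + (starRingEnd ℂ) β₁ * q, q)}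

lemma habs_aux (z w : ℂ) (hw : ‖w‖ ≤ 1) :
    ‖z * (1 - w * (starRingEnd ℂ) w)‖ = ‖z‖ * (1 - ‖w‖ ^ 2) := by
  rw [norm_mul, Complex.mul_conj]
  have h2 : Complex.normSq w ≤ 1 := by
    rw [← Complex.sq_norm]; nlinarith [norm_nonneg w]
  have h1 : (1 : ℂ) - (Complex.normSq w : ℂ) = ((1 - Complex.normSq w : ℝ) : ℂ) := by
    push_cast; ring
  rw [h1, Complex.norm_of_nonneg (by linarith), ← Complex.sq_norm]

lemma ineq_real (a b c : ℝ) (ha0 : 0 ≤ a) (hb0 : 0 ≤ b) (hc0 : 0 ≤ c)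
    (ha1 : a < 1) (hb1 : b < 1) (hc1 : c < 1) :
    a * (1 - (b*c)^2) + b * (1 - (c*a)^2) + c * (1 - (a*b)^2)
      + (a*b * (1 - c^2) + b*c * (1 - a^2) + c*a * (1 - b^2))
      < 3 * (1 - (a*b*c)^2) := by
  have hab : a * b < 1 := by nlinarith
  have hbc : b * c < 1 := by nlinarith
  have hca : c * a < 1 := by nlinarith
  have habc : a * b * c < 1 := by nlinarith [mul_nonneg hb0 hc0]
  nlinarith [mul_pos (mul_pos (by linarith : (0:ℝ) < 1 - a) (by linarith : (0:ℝ) < 1 - b*c))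
      (by linarith : (0:ℝ) < 1 - a*b*c),
    mul_pos (mul_pos (by linarith : (0:ℝ) < 1 - b) (by linarith : (0:ℝ) < 1 - c*a))
      (by linarith : (0:ℝ) < 1 - a*b*c),
    mul_pos (mul_pos (by linarith : (0:ℝ) < 1 - c) (by linarith : (0:ℝ) < 1 - a*b))
      (by linarith : (0:ℝ) < 1 - a*b*c)]

lemma subset_lemma : G3 ⊆ G3ext := by
  rintro p ⟨z₁, z₂, z₃, h₁, h₂, h₃, rfl⟩
  obtain ⟨a, ha⟩ : ∃ a : ℝ, ‖z₁‖ = a := ⟨_, rfl⟩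
  obtain ⟨b, hb⟩ : ∃ b : ℝ, ‖z₂‖ = b := ⟨_, rfl⟩
  obtain ⟨c, hc⟩ : ∃ c : ℝ, ‖z₃‖ = c := ⟨_, rfl⟩
  have ha0 : 0 ≤ a := ha ▸ norm_nonneg z₁
  have hb0 : 0 ≤ b := hb ▸ norm_nonneg z₂
  have hc0 : 0 ≤ c := hc ▸ norm_nonneg z₃
  have ha1 : a < 1 := ha ▸ h₁
  have hb1 : b < 1 := hb ▸ h₂
  have hc1 : c < 1 := hc ▸ h₃
  have hab : a * b < 1 := by nlinarith
  have hbc : b * c < 1 := by nlinarith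
  have hca : c * a < 1 := by nlinarith
  have hP : a * b * c < 1 := by nlinarith [mul_nonneg hb0 hc0]
  obtain ⟨d, hd⟩ : ∃ d : ℝ, d = 1 - (a*b*c)^2 := ⟨_, rfl⟩
  have hd0 : 0 < d := by
    rw [hd]; nlinarith [mul_nonneg (mul_nonneg ha0 hb0) hc0]
  have hdC : (d : ℂ) ≠ 0 := by exact_mod_cast hd0.ne'
  have habsQ : ‖z₁ * z₂ * z₃‖ = a * b * c := by
    rw [norm_mul, norm_mul, ha, hb, hc]
  have hqd : (z₁*z₂*z₃) * (starRingEnd ℂ) (z₁*z₂*z₃) = 1 - (d : ℂ) := by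
    rw [Complex.mul_conj, ← Complex.sq_norm, habsQ, hd]; push_cast; ring
  refine ⟨((z₁+z₂+z₃) - (starRingEnd ℂ) (z₁*z₂+z₂*z₃+z₃*z₁) * (z₁*z₂*z₃)) / (d : ℂ),
    ((z₁*z₂+z₂*z₃+z₃*z₁) - (starRingEnd ℂ) (z₁+z₂+z₃) * (z₁*z₂*z₃)) / (d : ℂ),
    z₁*z₂*z₃, by rw [habsQ]; exact hP, ?_, ?_⟩
  · -- norm bound
    have key1 : (z₁+z₂+z₃) - (starRingEnd ℂ) (z₁*z₂+z₂*z₃+z₃*z₁) * (z₁*z₂*z₃) =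
        z₁ * (1 - (z₂*z₃) * (starRingEnd ℂ) (z₂*z₃)) + (z₂ * (1 - (z₃*z₁) * (starRingEnd ℂ) (z₃*z₁))
          + z₃ * (1 - (z₁*z₂) * (starRingEnd ℂ) (z₁*z₂))) := by
      simp only [map_add, map_mul]; ring
    have key2 : (z₁*z₂+z₂*z₃+z₃*z₁) - (starRingEnd ℂ) (z₁+z₂+z₃) * (z₁*z₂*z₃) =
        (z₁*z₂) * (1 - z₃ * (starRingEnd ℂ) z₃) + ((z₂*z₃) * (1 - z₁ * (starRingEnd ℂ) z₁)
          + (z₃*z₁) * (1 - z₂ * (starRingEnd ℂ) z₂)) := by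
      simp only [map_add, map_mul]; ring
    have hA : ‖(z₁+z₂+z₃) - (starRingEnd ℂ) (z₁*z₂+z₂*z₃+z₃*z₁) * (z₁*z₂*z₃)‖ ≤
        a * (1 - (b*c)^2) + (b * (1 - (c*a)^2) + c * (1 - (a*b)^2)) := by
      rw [key1]
      refine ((norm_add_le _ _).trans
        (add_le_add_right (norm_add_le _ _) _)).trans_eq ?_
      rw [habs_aux _ _ (by rw [norm_mul, hb, hc]; exact hbc.le),
        habs_aux _ _ (by rw [norm_mul, hc, ha]; exact hca.le),
        habs_aux _ _ (by rw [norm_mul, ha, hb]; exact hab.le)]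
      simp only [norm_mul, ha, hb, hc]
    have hB : ‖(z₁*z₂+z₂*z₃+z₃*z₁) - (starRingEnd ℂ) (z₁+z₂+z₃) * (z₁*z₂*z₃)‖ ≤
        a*b * (1 - c^2) + (b*c * (1 - a^2) + c*a * (1 - b^2)) := by
      rw [key2]
      refine ((norm_add_le _ _).trans
        (add_le_add_right (norm_add_le _ _) _)).trans_eq ?_
      rw [habs_aux _ _ h₃.le, habs_aux _ _ h₁.le, habs_aux _ _ h₂.le]
      simp only [norm_mul, ha, hb, hc]
    rw [norm_div, norm_div, Complex.norm_of_nonneg hd0.le, ← add_div,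
      div_lt_iff₀ hd0]
    have := ineq_real a b c ha0 hb0 hc0 ha1 hb1 hc1
    rw [hd]; nlinarith
  · -- the defining equations
    simp only [Prod.mk.injEq]
    refine ⟨?_, ?_, trivial⟩
    · rw [map_div₀, map_sub, map_mul, Complex.conj_conj, Complex.conj_ofReal]
      field_simp
      simp only [map_add, map_mul] at hqd ⊢
      linear_combination (z₁+z₂+z₃) * hqd
    · rw [map_div₀, map_sub, map_mul, Complex.conj_conj, Complex.conj_ofReal]
      field_simp
      simp only [map_add, map_mul] at hqd ⊢
      linear_combination (z₁*z₂+z₂*z₃+z₃*z₁) * hqd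

/-- The point (5/2, 5/4, 1/2) belongs to G̃₃ but not to G₃, so G₃ ⊊ G̃₃. -/
theorem G3_proper_subset_G3ext :
    ((5/2 : ℂ), (5/4 : ℂ), (1/2 : ℂ)) ∈ G3ext ∧
    ((5/2 : ℂ), (5/4 : ℂ), (1/2 : ℂ)) ∉ G3 ∧
    G3 ⊂ G3ext := by
  have hmem : ((5/2 : ℂ), (5/4 : ℂ), (1/2 : ℂ)) ∈ G3ext := by
    refine ⟨5/2, 0, 1/2, by norm_num [norm_div], by norm_num [norm_div], ?_⟩
    norm_num [map_div₀, map_ofNat]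
  have hnot : ((5/2 : ℂ), (5/4 : ℂ), (1/2 : ℂ)) ∉ G3 := by
    rintro ⟨z₁, z₂, z₃, h₁, h₂, h₃, heq⟩
    rw [Prod.mk.injEq, Prod.mk.injEq] at heq
    obtain ⟨e1, e2, e3⟩ := heq
    have hz : (2 - z₁) * (2 - z₂) * (2 - z₃) = 0 := by linear_combination 4 * e1 - 2 * e2 + e3
    have h2' : ‖(2:ℂ)‖ = 2 := by norm_num
    rcases mul_eq_zero.1 hz with hz' | hz'
    · rcases mul_eq_zero.1 hz' with hz'' | hz''
      · rw [sub_eq_zero] at hz''; rw [← hz''] at h₁; rw [h2'] at h₁; linarith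
      · rw [sub_eq_zero] at hz''; rw [← hz''] at h₂; rw [h2'] at h₂; linarith
    · rw [sub_eq_zero] at hz'; rw [← hz'] at h₃; rw [h2'] at h₃; linarith
  exact ⟨hmem, hnot, subset_lemma, fun hsub => hnot (hsub hmem)⟩
end

section
/- Let n ≥ 2, 1 ≤ j ≤ n-1, C = binom(n, j), and y₁, y₂, q ∈ ℂ. Then the following are equivalent: (a) C - y₁z - y₂w + Cqzw ≠ 0 for all z, w in the closed unit disc; (b) |y₂| < C and |Cqz - y₁| < |y₂z - C| for all z in the closed unit disc. -/
/-- Key lemma: `a + w*b ≠ 0` for all `w` in the closed unit disc iff `|b| < |a|`. -/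
lemma key_disc (a b : ℂ) :
    (∀ w : ℂ, ‖w‖ ≤ 1 → a + w * b ≠ 0) ↔ ‖b‖ < ‖a‖ := by
  constructor
  · intro h
    by_contra h'
    push_neg at h'
    by_cases hb : b = 0
    · have ha : a = 0 := by
        have := h'
        rw [hb] at this
        simp at this
        exact this
      exact h 0 (by simp) (by simp [ha])
    · have hb' : ‖b‖ ≠ 0 := norm_ne_zero_iff.mpr hb
      refine h (-a / b) ?_ ?_
      · rw [norm_div, norm_neg]
        exact div_le_one_of_le₀ h' (norm_nonneg b)
      · field_simp
        ring
  · intro h w hw he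
    have ha : a = -(w * b) := by linear_combination he
    have : ‖a‖ ≤ ‖b‖ := by
      rw [ha, norm_neg, norm_mul]
      calc ‖w‖ * ‖b‖ ≤ 1 * ‖b‖ :=
            mul_le_mul_of_nonneg_right hw (norm_nonneg b)
        _ = ‖b‖ := one_mul _
    exact absurd h (not_lt.mpr this)

/-- Equivalence of conditions (2) and (3) in the characterization of points of the
extended symmetrized polydisc, for a single index `j`, with `C = n.choose j`. -/
theorem cond2_iff_cond3 (n j : ℕ) (hn : 2 ≤ n) (hj : 1 ≤ j) (hj' : j ≤ n - 1)
    (y₁ y₂ q : ℂ) :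
    (∀ z w : ℂ, ‖z‖ ≤ 1 → ‖w‖ ≤ 1 →
      (n.choose j : ℂ) - y₁ * z - y₂ * w + (n.choose j : ℂ) * q * z * w ≠ 0) ↔
    (‖y₂‖ < (n.choose j : ℝ) ∧ ∀ z : ℂ, ‖z‖ ≤ 1 →
      ‖(n.choose j : ℂ) * q * z - y₁‖ <
        ‖y₂ * z - (n.choose j : ℂ)‖) := by
  set C : ℂ := (n.choose j : ℂ) with hC
  have hjn : j ≤ n := le_trans hj' (Nat.sub_le n 1)
  have hCpos : 0 < (n.choose j : ℝ) := by
    exact_mod_cast Nat.choose_pos hjn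
  have habsC : ‖C‖ = (n.choose j : ℝ) := by
    rw [hC, Complex.norm_natCast]
  constructor
  · intro h
    constructor
    · have := (key_disc C (-y₂)).mp (fun w hw => by
        have := h 0 w (by simp) hw
        intro he; apply this; linear_combination he)
      rwa [norm_neg, habsC] at this
    · intro z hz
      have hlt : ‖C * q * z - y₁‖ < ‖C - y₂ * z‖ :=
        (key_disc (C - y₂ * z) (C * q * z - y₁)).mp (fun w hw => by
          have := h w z hw hz
          intro he; apply this; linear_combination he)
      have : y₂ * z - C = -(C - y₂ * z) := by ring
      rw [this, norm_neg]
      exact hlt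
  · rintro ⟨h₂, h₃⟩ z w hz hw he
    have hlt : ‖C * q * w - y₁‖ < ‖C - y₂ * w‖ := by
      have := h₃ w hw
      rwa [show y₂ * w - C = -(C - y₂ * w) by ring, norm_neg] at this
    exact (key_disc (C - y₂ * w) (C * q * w - y₁)).mpr hlt z hz (by linear_combination he)
end

section
/- Let C > 0 be a real number and y₁, y₂, q ∈ ℂ with |y₂| < C. Then the inequality |Cqz - y₁| < |y₂z - C| holds for all z on the unit circle if and only if |y₁|² - |y₂|² + C²|q|² + 2C|y₂ - ȳ₁q| < C². -/
/-- For a fixed w, Re(w z) < k for all unimodular z iff |w| < k. -/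
lemma key_sup (w : ℂ) (k : ℝ) :
    (∀ z : ℂ, ‖z‖ = 1 → (w * z).re < k) ↔ ‖w‖ < k := by
  constructor
  · intro H
    by_cases hw : w = 0
    · have := H 1 (by simp)
      simpa [hw] using this
    · have habs : ‖w‖ ≠ 0 := by simpa using hw
      have hz : ‖(starRingEnd ℂ) w / (‖w‖ : ℂ)‖ = 1 := by
        simp [map_div₀, habs]
      have := H _ hz
      have hval : w * ((starRingEnd ℂ) w / (‖w‖ : ℂ)) = (‖w‖ : ℂ) := by
        rw [mul_div_assoc', Complex.mul_conj, Complex.normSq_eq_norm_sq,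
          div_eq_iff (show ((‖w‖ : ℂ)) ≠ 0 by exact_mod_cast habs)]
        push_cast
        ring
      rw [hval] at this
      simpa using this
  · intro H z hz
    calc (w * z).re ≤ ‖w * z‖ := Complex.re_le_norm _
      _ = ‖w‖ := by rw [norm_mul, hz, mul_one]
      _ < k := H

lemma pt_eq (C : ℝ) (y₁ y₂ q z : ℂ) (hz : ‖z‖ = 1) :
    Complex.normSq (y₂ * z - (C : ℂ)) - Complex.normSq ((C : ℂ) * q * z - y₁)
      = (C^2 - ((‖y₁‖)^2 - (‖y₂‖)^2 + C^2 * (‖q‖)^2))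
        - (((2 * C : ℝ) : ℂ) * (y₂ - (starRingEnd ℂ) y₁ * q) * z).re := by
  have hz2 : z.re ^ 2 + z.im ^ 2 = 1 := by
    have := Complex.sq_norm z
    rw [hz] at this
    simpa [Complex.normSq_apply, sq] using this.symm
  rw [show (‖y₁‖)^2 = Complex.normSq y₁ from Complex.sq_norm y₁,
    show (‖y₂‖)^2 = Complex.normSq y₂ from Complex.sq_norm y₂,
    show (‖q‖)^2 = Complex.normSq q from Complex.sq_norm q]
  simp only [Complex.normSq_apply, Complex.sq_norm, Complex.mul_re, Complex.mul_im,
    Complex.sub_re, Complex.sub_im, Complex.ofReal_re, Complex.ofReal_im,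
    Complex.conj_re, Complex.conj_im]
  linear_combination (y₂.re ^ 2 + y₂.im ^ 2 - C ^ 2 * (q.re ^ 2 + q.im ^ 2)) * hz2

/-- Key computation behind the equivalence of conditions (3) and (5). -/
theorem circle_ineq_iff (C : ℝ) (hC : 0 < C) (y₁ y₂ q : ℂ)
    (h : ‖y₂‖ < C) :
    (∀ z : ℂ, ‖z‖ = 1 →
      ‖(C : ℂ) * q * z - y₁‖ < ‖y₂ * z - (C : ℂ)‖) ↔
    (‖y₁‖)^2 - (‖y₂‖)^2 + C^2 * (‖q‖)^2
      + 2 * C * ‖y₂ - (starRingEnd ℂ) y₁ * q‖ < C^2 := by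
  set w : ℂ := ((2 * C : ℝ) : ℂ) * (y₂ - (starRingEnd ℂ) y₁ * q) with hw
  set k : ℝ := C^2 - ((‖y₁‖)^2 - (‖y₂‖)^2 + C^2 * (‖q‖)^2)
    with hk
  have step1 : (∀ z : ℂ, ‖z‖ = 1 →
      ‖(C : ℂ) * q * z - y₁‖ < ‖y₂ * z - (C : ℂ)‖)
      ↔ (∀ z : ℂ, ‖z‖ = 1 → (w * z).re < k) := by
    apply forall_congr'
    intro z
    apply imp_congr_right
    intro hz
    have habs : ‖(C : ℂ) * q * z - y₁‖ < ‖y₂ * z - (C : ℂ)‖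
        ↔ Complex.normSq ((C : ℂ) * q * z - y₁) < Complex.normSq (y₂ * z - (C : ℂ)) := by
      rw [← Complex.sq_norm, ← Complex.sq_norm]
      constructor
      · intro h'; exact pow_lt_pow_left₀ h' (norm_nonneg _) (by norm_num)
      · intro h'
        exact lt_of_pow_lt_pow_left₀ 2 (norm_nonneg _) h'
    rw [habs]
    have := pt_eq C y₁ y₂ q z hz
    constructor <;> intro h' <;> [linarith; linarith]
  rw [step1, key_sup w k]
  have hwabs : ‖w‖ = 2 * C * ‖y₂ - (starRingEnd ℂ) y₁ * q‖ := by
    rw [hw, norm_mul, Complex.norm_real, Real.norm_eq_abs, abs_of_pos (by linarith)]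
  rw [hwabs, hk]
  constructor <;> intro <;> linarith
end

section
/- Let C > 0 and y₁, y₂, q ∈ ℂ with y₁y₂ ≠ C²q and |y₂| < C. Then C|y₁ - ȳ₂q| + |y₁y₂ - C²q| < C² - |y₂|² holds if and only if |y₁|² - |y₂|² + C²|q|² + 2C|y₂ - ȳ₁q| < C². -/
set_option maxHeartbeats 2000000 in
/-- Auxiliary real-arithmetic lemma: condition (4) implies condition (5). -/
private lemma real_equiv_fwd (C a b e r s t : ℝ) (hC : 0 < C) (ha : 0 ≤ a) (hb : 0 < b)
    (he : 0 ≤ e) (hr : 0 ≤ r) (hs : 0 ≤ s) (ht : 0 ≤ t) (hsC : s < C)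
    (idI : b^2 = C^2*a^2 + (C^2 - s^2)*(C^2*t^2 - r^2))
    (idII : C^2*e^2 = b^2 + (C^2 - r^2)*(s^2 - C^2*t^2))
    (hqb : (C^2 - s^2)*t ≤ s*a + b)
    (hrb : (C^2 - s^2)*r ≤ C^2*a + s*b)
    (H4 : C*a + b < C^2 - s^2) :
    r^2 - s^2 + C^2*t^2 + 2*C*e < C^2 := by
  have hd : 0 < C^2 - s^2 := by nlinarith
  have hCa : C*a < C^2 - s^2 := by nlinarith
  have hCa2 : (C*a)^2 < (C^2 - s^2)^2 := by
    apply pow_lt_pow_left₀ hCa (by positivity)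
    norm_num
  have hdpK : 0 < (C^2 - s^2) + (C^2*t^2 - r^2) := by nlinarith [hCa2, hb, idI]
  have h2Ca : 2*(C*a) < (C^2 - s^2) - (C^2*t^2 - r^2) := by nlinarith [hCa2, hb, idI, hd]
  have h1 : ((C^2-s^2)*r)^2 ≤ (C^2*a + s*b)^2 := by
    apply pow_le_pow_left₀ (by positivity) hrb
  have h2 : ((C^2-s^2)*t)^2 ≤ (s*a + b)^2 := by
    apply pow_le_pow_left₀ (by positivity) hqb
  have h3 : (C*a + b)^2 < (C^2-s^2)^2 := by
    apply pow_lt_pow_left₀ H4 (by positivity); norm_num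
  have h3' : (C^2 + s^2)*(C*a + b)^2 < (C^2+s^2)*(C^2-s^2)^2 :=
    mul_lt_mul_of_pos_left h3 (by positivity)
  have habs : 0 ≤ 2*C*a*b*(C-s)^2 := by positivity
  have hS' : 0 < (C^2-s^2)^2 * (C^2 - r^2 + s^2 - C^2*t^2) := by nlinarith [h1, h2, h3', habs]
  have hS : 0 < C^2 - r^2 + s^2 - C^2*t^2 := by
    by_contra hcon
    push_neg at hcon
    nlinarith [hS', sq_nonneg (C^2 - s^2)]
  have h2Ca2 : (2*(C*a))^2 < ((C^2 - s^2) - (C^2*t^2 - r^2))^2 := by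
    apply pow_lt_pow_left₀ h2Ca (by positivity); norm_num
  have h4b2 : (2*b)^2 < ((C^2 - s^2) + (C^2*t^2 - r^2))^2 := by nlinarith [h2Ca2, idI]
  have h2Ce2 : (2*(C*e))^2 < (C^2 - r^2 + s^2 - C^2*t^2)^2 := by nlinarith [h4b2, idII]
  nlinarith [h2Ce2, hS, mul_nonneg hC.le he]

set_option maxHeartbeats 2000000 in
/-- Auxiliary real-arithmetic lemma: condition (5) implies condition (4). -/
private lemma real_equiv_bwd (C a b e r s t : ℝ) (hC : 0 < C) (ha : 0 ≤ a) (hb : 0 < b)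
    (he : 0 ≤ e) (hr : 0 ≤ r) (hs : 0 ≤ s) (ht : 0 ≤ t) (hsC : s < C)
    (idI : b^2 = C^2*a^2 + (C^2 - s^2)*(C^2*t^2 - r^2))
    (idII : C^2*e^2 = b^2 + (C^2 - r^2)*(s^2 - C^2*t^2))
    (he1 : s - r*t ≤ e) (he2 : r*t - s ≤ e)
    (H5 : r^2 - s^2 + C^2*t^2 + 2*C*e < C^2) :
    C*a + b < C^2 - s^2 := by
  have hd : 0 < C^2 - s^2 := by nlinarith
  have hS : 0 < C^2 - r^2 + s^2 - C^2*t^2 := by nlinarith [mul_nonneg hC.le he]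
  have h2Ce2 : (2*(C*e))^2 < (C^2 - r^2 + s^2 - C^2*t^2)^2 := by
    apply pow_lt_pow_left₀ (by linarith) (by positivity)
    norm_num
  have hmul1 := mul_le_mul_of_nonneg_left he1 (by positivity : (0:ℝ) ≤ 2*C)
  have hmul2 := mul_le_mul_of_nonneg_left he2 (by positivity : (0:ℝ) ≤ 2*C)
  have hrt1 : (r - C*t)^2 < (C - s)^2 := by nlinarith [hmul1, H5]
  have hrt2 : (r + C*t)^2 < (C + s)^2 := by nlinarith [hmul2, H5]
  have hrt2' : r + C*t < C + s := by
    nlinarith [hrt2, hr, mul_nonneg hC.le ht, hs, hC]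
  have habs1 : |r - C*t| < C - s := by
    rw [abs_lt]
    constructor <;> nlinarith [hrt1]
  obtain ⟨l1, l2⟩ := abs_lt.mp habs1
  have hdmK : 0 < (C^2 - s^2) - (C^2*t^2 - r^2) := by
    nlinarith [mul_nonneg (show (0:ℝ) ≤ (r - C*t) + (C - s) by linarith)
        (show (0:ℝ) ≤ r + C*t by positivity),
      mul_pos (show (0:ℝ) < C - s by linarith) (show (0:ℝ) < (C + s) - (r + C*t) by linarith)]
  have hdpK : 0 < (C^2 - s^2) + (C^2*t^2 - r^2) := by
    nlinarith [mul_nonneg (show (0:ℝ) ≤ (C - s) - (r - C*t) by linarith)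
        (show (0:ℝ) ≤ r + C*t by positivity),
      mul_pos (show (0:ℝ) < C - s by linarith) (show (0:ℝ) < (C + s) - (r + C*t) by linarith)]
  have h4b2 : (2*b)^2 < ((C^2 - s^2) + (C^2*t^2 - r^2))^2 := by nlinarith [idII, h2Ce2]
  have h4a2 : (2*(C*a))^2 < ((C^2 - s^2) - (C^2*t^2 - r^2))^2 := by nlinarith [idI, h4b2]
  have h2Ca : 2*(C*a) < (C^2 - s^2) - (C^2*t^2 - r^2) := by
    nlinarith [h4a2, hdmK, mul_nonneg hC.le ha]
  have hCad : C*a < C^2 - s^2 := by linarith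
  nlinarith [idI, hb, hd, mul_pos hd (show (0:ℝ) < (C^2 - s^2) - 2*(C*a) - (C^2*t^2 - r^2) by linarith)]

/-- Equivalence of conditions (4) and (5) in the characterization of the extended
symmetrized polydisc, for a single index with `C = n.choose j`. -/
theorem cond4_iff_cond5 (C : ℝ) (hC : 0 < C) (y₁ y₂ q : ℂ)
    (hne : y₁ * y₂ ≠ (C : ℂ)^2 * q) (h : ‖y₂‖ < C) :
    (C * ‖y₁ - (starRingEnd ℂ) y₂ * q‖
        + ‖y₁ * y₂ - (C : ℂ)^2 * q‖ < C^2 - (‖y₂‖)^2) ↔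
    ((‖y₁‖)^2 - (‖y₂‖)^2 + C^2 * (‖q‖)^2
        + 2 * C * ‖y₂ - (starRingEnd ℂ) y₁ * q‖ < C^2) := by
  set a := ‖y₁ - (starRingEnd ℂ) y₂ * q‖ with ha_def
  set b := ‖y₁ * y₂ - (C : ℂ)^2 * q‖ with hb_def
  set e := ‖y₂ - (starRingEnd ℂ) y₁ * q‖ with he_def
  set r := ‖y₁‖ with hr_def
  set s := ‖y₂‖ with hs_def
  set t := ‖q‖ with ht_def
  have ha : 0 ≤ a := norm_nonneg _
  have hb : 0 < b := norm_pos_iff.mpr (sub_ne_zero.mpr hne)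
  have he : 0 ≤ e := norm_nonneg _
  have hr : 0 ≤ r := norm_nonneg _
  have hs : 0 ≤ s := norm_nonneg _
  have ht : 0 ≤ t := norm_nonneg _
  have hd : 0 < C^2 - s^2 := by nlinarith
  have idI : b^2 = C^2*a^2 + (C^2 - s^2)*(C^2*t^2 - r^2) := by
    rw [ha_def, hb_def, hr_def, hs_def, ht_def]
    simp only [Complex.sq_norm, Complex.normSq_apply, Complex.sub_re, Complex.sub_im,
      Complex.mul_re, Complex.mul_im, Complex.conj_re, Complex.conj_im,
      Complex.ofReal_re, Complex.ofReal_im, pow_two, Complex.norm_mul_self_eq_normSq]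
    ring
  have idII : C^2*e^2 = b^2 + (C^2 - r^2)*(s^2 - C^2*t^2) := by
    rw [hb_def, he_def, hr_def, hs_def, ht_def]
    simp only [Complex.sq_norm, Complex.normSq_apply, Complex.sub_re, Complex.sub_im,
      Complex.mul_re, Complex.mul_im, Complex.conj_re, Complex.conj_im,
      Complex.ofReal_re, Complex.ofReal_im, pow_two, Complex.norm_mul_self_eq_normSq]
    ring
  have hconj : ((s : ℝ)^2 : ℂ) = y₂ * (starRingEnd ℂ) y₂ := by
    rw [Complex.mul_conj]; norm_cast; exact Complex.sq_norm y₂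
  have hqb : (C^2 - s^2)*t ≤ s*a + b := by
    have key : ((C^2 - s^2 : ℝ) : ℂ) * q
        = y₂*(y₁ - (starRingEnd ℂ) y₂ * q) - (y₁*y₂ - (C:ℂ)^2*q) := by
      push_cast
      rw [show ((s:ℝ)^2 : ℂ) = y₂ * (starRingEnd ℂ) y₂ from hconj]
      ring
    calc (C^2 - s^2)*t = ‖((C^2 - s^2 : ℝ) : ℂ) * q‖ := by
          rw [norm_mul, Complex.norm_real, Real.norm_eq_abs, abs_of_pos hd, ht_def]
      _ = ‖y₂*(y₁ - (starRingEnd ℂ) y₂ * q) - (y₁*y₂ - (C:ℂ)^2*q)‖ := by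
          rw [key]
      _ ≤ ‖y₂*(y₁ - (starRingEnd ℂ) y₂ * q)‖ + ‖y₁*y₂ - (C:ℂ)^2*q‖ :=
          norm_sub_le _ _
      _ = s*a + b := by rw [norm_mul]
  have hrb : (C^2 - s^2)*r ≤ C^2*a + s*b := by
    have key : ((C^2 - s^2 : ℝ) : ℂ) * y₁
        = (C:ℂ)^2*(y₁ - (starRingEnd ℂ) y₂ * q)
          - (starRingEnd ℂ) y₂*(y₁*y₂ - (C:ℂ)^2*q) := by
      push_cast
      rw [show ((s:ℝ)^2 : ℂ) = y₂ * (starRingEnd ℂ) y₂ from hconj]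
      ring
    calc (C^2 - s^2)*r = ‖((C^2 - s^2 : ℝ) : ℂ) * y₁‖ := by
          rw [norm_mul, Complex.norm_real, Real.norm_eq_abs, abs_of_pos hd, hr_def]
      _ = ‖(C:ℂ)^2*(y₁ - (starRingEnd ℂ) y₂ * q)
            - (starRingEnd ℂ) y₂*(y₁*y₂ - (C:ℂ)^2*q)‖ := by rw [key]
      _ ≤ ‖(C:ℂ)^2*(y₁ - (starRingEnd ℂ) y₂ * q)‖
            + ‖(starRingEnd ℂ) y₂*(y₁*y₂ - (C:ℂ)^2*q)‖ :=
          norm_sub_le _ _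
      _ = C^2*a + s*b := by
          rw [norm_mul, norm_mul, Complex.norm_conj, norm_pow, Complex.norm_real, Real.norm_eq_abs,
            abs_of_pos hC]
  have htri := abs_norm_sub_norm_le y₂ ((starRingEnd ℂ) y₁ * q)
  rw [norm_mul, Complex.norm_conj] at htri
  have he1 : s - r*t ≤ e := (le_abs_self _).trans htri
  have he2 : r*t - s ≤ e := by
    rw [abs_sub_comm] at htri
    exact (le_abs_self _).trans htri
  constructor
  · intro H4
    exact real_equiv_fwd C a b e r s t hC ha hb he hr hs ht h idI idII hqb hrb H4
  · intro H5
    exact real_equiv_bwd C a b e r s t hC ha hb he hr hs ht h idI idII he1 he2 H5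
end

section
/- Let C > 0 and y₁, y₂, q ∈ ℂ. The two conditions 'C|y₁ - ȳ₂q| + |y₁y₂ - C²q| < C² - |y₂|²' and 'C|y₂ - ȳ₁q| + |y₁y₂ - C²q| < C² - |y₁|²' together imply |y₂ - ȳ₁q| + |y₁ - ȳ₂q| < C(1 - |q|²). -/
lemma key_id (C : ℝ) (q x y : ℂ) :
    (‖x * y - (C : ℂ)^2 * q‖)^2
      = (C^2 - (‖y‖)^2) * (C^2 * (‖q‖)^2 - (‖x‖)^2)
        + C^2 * (‖x - (starRingEnd ℂ) y * q‖)^2 := by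
  simp only [Complex.sq_norm, ← Complex.ofReal_pow, Complex.normSq_apply, Complex.mul_re, Complex.mul_im,
    Complex.sub_re, Complex.sub_im, Complex.conj_re, Complex.conj_im,
    Complex.ofReal_re, Complex.ofReal_im]
  ring

/-- Implication (2) ⟹ (7) in the characterization of the extended symmetrized polydisc. -/
theorem cond4_pair_implies_cond7 (C : ℝ) (hC : 0 < C) (y₁ y₂ q : ℂ)
    (h₁ : C * ‖y₁ - (starRingEnd ℂ) y₂ * q‖
        + ‖y₁ * y₂ - (C : ℂ)^2 * q‖ < C^2 - (‖y₂‖)^2)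
    (h₂ : C * ‖y₂ - (starRingEnd ℂ) y₁ * q‖
        + ‖y₁ * y₂ - (C : ℂ)^2 * q‖ < C^2 - (‖y₁‖)^2) :
    ‖y₂ - (starRingEnd ℂ) y₁ * q‖ + ‖y₁ - (starRingEnd ℂ) y₂ * q‖
      < C * (1 - (‖q‖)^2) := by
  set t := ‖y₁ - (starRingEnd ℂ) y₂ * q‖ with ht
  set u := ‖y₂ - (starRingEnd ℂ) y₁ * q‖ with hu
  set s := ‖y₁ * y₂ - (C : ℂ)^2 * q‖ with hs
  set a := ‖y₁‖ with ha
  set b := ‖y₂‖ with hb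
  set r := ‖q‖ with hr
  have id1 : s^2 = (C^2 - b^2) * (C^2 * r^2 - a^2) + C^2 * t^2 := key_id C q y₁ y₂
  have id2 : s^2 = (C^2 - a^2) * (C^2 * r^2 - b^2) + C^2 * u^2 := by
    have := key_id C q y₂ y₁
    rwa [mul_comm y₂ y₁] at this
  have ht0 : 0 ≤ t := norm_nonneg _
  have hu0 : 0 ≤ u := norm_nonneg _
  have hs0 : 0 ≤ s := norm_nonneg _
  have hA : 0 < C^2 - b^2 := lt_of_le_of_lt (by positivity) h₁
  have hB : 0 < C^2 - a^2 := lt_of_le_of_lt (by positivity) h₂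
  have e1 : C^2 * r^2 - a^2 + 2*C*t < C^2 - b^2 := by
    have hlt : s < (C^2 - b^2) - C*t := by linarith
    have hpos : 0 < (C^2 - b^2) - C*t := lt_of_le_of_lt hs0 hlt
    have hsq : s^2 < ((C^2 - b^2) - C*t)^2 := by nlinarith
    rw [id1] at hsq
    have h3 : (C^2 - b^2) * (C^2*r^2 - a^2 + 2*C*t) < (C^2-b^2) * (C^2-b^2) := by nlinarith
    exact (mul_lt_mul_iff_right₀ hA).mp h3
  have e2 : C^2 * r^2 - b^2 + 2*C*u < C^2 - a^2 := by
    have hlt : s < (C^2 - a^2) - C*u := by linarith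
    have hpos : 0 < (C^2 - a^2) - C*u := lt_of_le_of_lt hs0 hlt
    have hsq : s^2 < ((C^2 - a^2) - C*u)^2 := by nlinarith
    rw [id2] at hsq
    have h3 : (C^2 - a^2) * (C^2*r^2 - b^2 + 2*C*u) < (C^2-a^2) * (C^2-a^2) := by nlinarith
    exact (mul_lt_mul_iff_right₀ hB).mp h3
  have : 2*C*(u + t) < 2*C*(C*(1 - r^2)) := by ring_nf; ring_nf at e1 e2; nlinarith
  have := (mul_lt_mul_iff_right₀ (by positivity : (0:ℝ) < 2*C)).mp this
  linarith
end

section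
/- Let C > 0, q ∈ ℂ with |q| < 1, and β₁, β₂ ∈ ℂ with |β₁| + |β₂| < C. Set y₁ = β₁ + β̄₂q and y₂ = β₂ + β̄₁q. Then |y₁|² - |y₂|² + C²|q|² - 2C|y₂ - ȳ₁q| < C², and moreover y₂ - ȳ₁q = β₂(1 - |q|²) and |y₁|² - |y₂|² = (|β₁|² - |β₂|²)(1 - |q|²). -/
/-- Computation showing every point of the extended symmetrized polydisc satisfies the
defining inequality (5), with `C = n.choose j`. -/
theorem extended_point_ineq (C : ℝ) (hC : 0 < C) (q β₁ β₂ : ℂ)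
    (hq : ‖q‖ < 1) (hβ : ‖β₁‖ + ‖β₂‖ < C)
    (y₁ y₂ : ℂ) (hy₁ : y₁ = β₁ + (starRingEnd ℂ) β₂ * q)
    (hy₂ : y₂ = β₂ + (starRingEnd ℂ) β₁ * q) :
    ((‖y₁‖)^2 - (‖y₂‖)^2 + C^2 * (‖q‖)^2
      - 2 * C * ‖y₂ - (starRingEnd ℂ) y₁ * q‖ < C^2) ∧
    y₂ - (starRingEnd ℂ) y₁ * q = β₂ * ((1 - (‖q‖)^2 : ℝ) : ℂ) ∧
    (‖y₁‖)^2 - (‖y₂‖)^2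
      = ((‖β₁‖)^2 - (‖β₂‖)^2) * (1 - (‖q‖)^2) := by
  have h2 : y₂ - (starRingEnd ℂ) y₁ * q = β₂ * ((1 - (‖q‖)^2 : ℝ) : ℂ) := by
    subst hy₁ hy₂
    have h : (((‖q‖ : ℝ) : ℂ))^2 = (starRingEnd ℂ) q * q := by
      rw [← Complex.ofReal_pow, Complex.sq_norm, ← Complex.mul_conj]; ring
    push_cast
    rw [h]
    simp [map_add, map_mul, Complex.conj_conj]
    ring
  have h3 : (‖y₁‖)^2 - (‖y₂‖)^2
      = ((‖β₁‖)^2 - (‖β₂‖)^2) * (1 - (‖q‖)^2) := by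
    subst hy₁ hy₂
    simp only [Complex.sq_norm, Complex.normSq_apply, Complex.add_re, Complex.add_im,
      Complex.mul_re, Complex.mul_im, Complex.conj_re, Complex.conj_im]
    ring
  refine ⟨?_, h2, h3⟩
  rw [h3, h2]
  have hq2 : 0 < 1 - (‖q‖)^2 := by nlinarith [norm_nonneg q]
  have habs : ‖(β₂ * ((1 - (‖q‖)^2 : ℝ) : ℂ))‖
      = ‖β₂‖ * (1 - (‖q‖)^2) := by
    rw [norm_mul, Complex.norm_real, Real.norm_eq_abs, abs_of_pos hq2]
  rw [habs]
  have h1 := norm_nonneg β₁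
  have h2' := norm_nonneg β₂
  have key : (‖β₁‖)^2 < (C + ‖β₂‖)^2 := by nlinarith
  nlinarith [mul_pos hq2 (sub_pos.mpr key)]
end

section
/- Let C > 0 and y₁, y₂, q ∈ ℂ with |q| < 1. If |y₂ - ȳ₁q| + |y₁ - ȳ₂q| < C(1 - |q|²), then setting β₁ = (y₁ - ȳ₂q)/(1 - |q|²) and β₂ = (y₂ - ȳ₁q)/(1 - |q|²), one has y₁ = β₁ + β̄₂q, y₂ = β₂ + β̄₁q, and |β₁| + |β₂| < C. -/
/-- Implication (7) ⟹ (1): the inequality produces an explicit representation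
witnessing membership in the extended symmetrized polydisc. -/
theorem cond7_implies_representation (C : ℝ) (hC : 0 < C) (y₁ y₂ q : ℂ)
    (hq : ‖q‖ < 1)
    (h : ‖y₂ - (starRingEnd ℂ) y₁ * q‖
        + ‖y₁ - (starRingEnd ℂ) y₂ * q‖ < C * (1 - (‖q‖)^2)) :
    y₁ = (y₁ - (starRingEnd ℂ) y₂ * q) / ((1 - (‖q‖)^2 : ℝ) : ℂ)
          + (starRingEnd ℂ) ((y₂ - (starRingEnd ℂ) y₁ * q) / ((1 - (‖q‖)^2 : ℝ) : ℂ)) * q ∧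
    y₂ = (y₂ - (starRingEnd ℂ) y₁ * q) / ((1 - (‖q‖)^2 : ℝ) : ℂ)
          + (starRingEnd ℂ) ((y₁ - (starRingEnd ℂ) y₂ * q) / ((1 - (‖q‖)^2 : ℝ) : ℂ)) * q ∧
    ‖(y₁ - (starRingEnd ℂ) y₂ * q) / ((1 - (‖q‖)^2 : ℝ) : ℂ)‖
      + ‖(y₂ - (starRingEnd ℂ) y₁ * q) / ((1 - (‖q‖)^2 : ℝ) : ℂ)‖ < C := by
  have hd : (0:ℝ) < 1 - (‖q‖)^2 := by nlinarith [norm_nonneg q]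
  have hd' : ((1 - (‖q‖)^2 : ℝ) : ℂ) ≠ 0 := by exact_mod_cast ne_of_gt hd
  have key : ((1 - (‖q‖)^2 : ℝ) : ℂ) = 1 - q * (starRingEnd ℂ) q := by
    rw [Complex.mul_conj]; rw [Complex.sq_norm]; push_cast; ring
  have hne : (1 : ℂ) - q * (starRingEnd ℂ) q ≠ 0 := key ▸ hd'
  refine ⟨?_, ?_, ?_⟩
  · rw [key]
    rw [map_div₀]
    simp only [map_sub, map_mul, map_one, Complex.conj_conj]
    rw [mul_comm ((starRingEnd ℂ) q) q, div_mul_eq_mul_div, ← add_div,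
      eq_div_iff hne]
    ring
  · rw [key]
    rw [map_div₀]
    simp only [map_sub, map_mul, map_one, Complex.conj_conj]
    rw [mul_comm ((starRingEnd ℂ) q) q, div_mul_eq_mul_div, ← add_div,
      eq_div_iff hne]
    ring
  · rw [norm_div, norm_div, Complex.norm_real, Real.norm_eq_abs, abs_of_pos hd, ← add_div,
      div_lt_iff₀ hd]
    linarith
end

section
/- Let C > 0 and y₁, y₂, q ∈ ℂ. Then the following are equivalent: (a) |q| < 1 and |y₁|² + |y₂|² - C²|q|² + 2|y₁y₂ - C²q| < C²; (b) there exists a 2×2 complex matrix B with operator norm ‖B‖ < 1, B₁₁ = y₁/C, B₂₂ = y₂/C, B₁₂ = B₂₁, and det B = q. -/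
set_option maxHeartbeats 1000000

open Complex Matrix

private lemma Qval' (a b d u v : ℂ) :
    ‖Matrix.toEuclideanCLM (𝕜 := ℂ) !![a, b; b, d] ((WithLp.equiv 2 _).symm ![u, v])‖ ^ 2
      = (normSq a + normSq b) * normSq u + (normSq b + normSq d) * normSq v
        + 2 * ((a * (starRingEnd ℂ) b + b * (starRingEnd ℂ) d)
            * (u * (starRingEnd ℂ) v)).re := by
  rw [show Matrix.toEuclideanCLM (𝕜 := ℂ) !![a, b; b, d] ((WithLp.equiv 2 _).symm ![u, v]) =
      (WithLp.equiv 2 _).symm ![a * u + b * v, b * u + d * v] by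
    rw [Matrix.toEuclideanCLM_toLp]
    congr 1
    funext i
    fin_cases i <;> simp [Matrix.mulVec, dotProduct, Fin.sum_univ_two]]
  rw [show ‖(WithLp.equiv 2 (Fin 2 → ℂ)).symm ![a * u + b * v, b * u + d * v]‖ ^ 2
      = ‖a * u + b * v‖ ^ 2 + ‖b * u + d * v‖ ^ 2 by
    rw [EuclideanSpace.norm_eq, Real.sq_sqrt (by positivity)]
    simp [Fin.sum_univ_two]]
  rw [Complex.sq_norm, Complex.sq_norm]
  simp only [Complex.normSq_apply, Complex.mul_re, Complex.mul_im, Complex.add_re, Complex.add_im,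
    Complex.conj_re, Complex.conj_im]
  ring

private lemma norm_symm_sq' (w : Fin 2 → ℂ) :
    ‖(WithLp.equiv 2 (Fin 2 → ℂ)).symm w‖ ^ 2
      = ‖w 0‖ ^ 2 + ‖w 1‖ ^ 2 := by
  rw [EuclideanSpace.norm_eq, Real.sq_sqrt (by positivity)]
  simp [Fin.sum_univ_two]

private lemma quad_aux' (A B R U V : ℝ) (hA : 0 ≤ A) (hB : 0 ≤ B) (hU : 0 ≤ U) (hV : 0 ≤ V)
    (h : R ^ 2 ≤ A * B) : 2 * R * U * V ≤ A * U ^ 2 + B * V ^ 2 := by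
  nlinarith [sq_nonneg (A * U ^ 2 - B * V ^ 2), mul_nonneg hU hV, sq_nonneg (U * V),
    mul_nonneg (mul_nonneg hA hU) hU, mul_nonneg (mul_nonneg hB hV) hV]

private lemma normSq_det_identity' (a b d : ℂ) : Complex.normSq (a * d - b ^ 2) =
    (normSq a + normSq b) * (normSq b + normSq d)
      - normSq (a * (starRingEnd ℂ) b + b * (starRingEnd ℂ) d) := by
  simp only [Complex.normSq_apply, Complex.mul_re, Complex.mul_im, Complex.sub_re, Complex.sub_im,
    Complex.add_re, Complex.add_im, Complex.conj_re, Complex.conj_im, pow_two]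
  ring

private lemma core' (a b d : ℂ) :
    ‖Matrix.toEuclideanCLM (𝕜 := ℂ) !![a, b; b, d]‖ < 1 ↔
      ‖a * d - b ^ 2‖ < 1 ∧
        ‖a‖ ^ 2 + ‖d‖ ^ 2 + 2 * ‖b‖ ^ 2
          < 1 + ‖a * d - b ^ 2‖ ^ 2 := by
  set T := Matrix.toEuclideanCLM (𝕜 := ℂ) !![a, b; b, d] with hT
  set p : ℝ := normSq a + normSq b with hpdef
  set s : ℝ := normSq b + normSq d with hsdef
  set r : ℂ := a * (starRingEnd ℂ) b + b * (starRingEnd ℂ) d with hrdef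
  set R : ℝ := ‖r‖ with hRdef
  set Δ : ℝ := normSq (a * d - b ^ 2) with hΔdef
  have hident : Δ = p * s - R ^ 2 := by
    rw [hΔdef, hRdef, Complex.sq_norm, normSq_det_identity' a b d]
  have hp0 : 0 ≤ p := add_nonneg (normSq_nonneg _) (normSq_nonneg _)
  have hs0 : 0 ≤ s := add_nonneg (normSq_nonneg _) (normSq_nonneg _)
  have hR0 : 0 ≤ R := norm_nonneg _
  have hΔ0 : 0 ≤ Δ := normSq_nonneg _
  have habsΔ : ‖a * d - b ^ 2‖ ^ 2 = Δ := Complex.sq_norm _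
  have habs0 : 0 ≤ ‖a * d - b ^ 2‖ := norm_nonneg _
  have hsum : ‖a‖ ^ 2 + ‖d‖ ^ 2 + 2 * ‖b‖ ^ 2 = p + s := by
    rw [Complex.sq_norm, Complex.sq_norm, Complex.sq_norm]; rw [hpdef, hsdef]; ring
  constructor
  · intro h
    set c : ℝ := ‖T‖ ^ 2 with hcdef
    have hc0 : 0 ≤ c := sq_nonneg _
    have hc1 : c < 1 := by nlinarith [norm_nonneg T]
    have hQ : ∀ u v : ℂ, p * normSq u + s * normSq v
        + 2 * (r * (u * (starRingEnd ℂ) v)).re ≤ c * (normSq u + normSq v) := by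
      intro u v
      have h1 := T.le_opNorm ((WithLp.equiv 2 _).symm ![u, v])
      have h2 : ‖T ((WithLp.equiv 2 _).symm ![u, v])‖ ^ 2
          ≤ c * ‖(WithLp.equiv 2 (Fin 2 → ℂ)).symm ![u, v]‖ ^ 2 := by
        rw [hcdef]
        nlinarith [norm_nonneg ((WithLp.equiv 2 (Fin 2 → ℂ)).symm ![u, v]),
          norm_nonneg (T ((WithLp.equiv 2 _).symm ![u, v])), norm_nonneg T]
      rw [hT, Qval', norm_symm_sq'] at h2
      simp only [Matrix.cons_val_zero, Matrix.cons_val_one, Matrix.head_cons] at h2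
      rw [Complex.sq_norm, Complex.sq_norm] at h2
      rw [hpdef, hsdef, hrdef]
      linarith
    have hpc : p ≤ c := by
      have := hQ 1 0
      simpa using this
    have hsc : s ≤ c := by
      have := hQ 0 1
      simpa using this
    have hRc : R ^ 2 ≤ (c - p) * (c - s) := by
      rcases eq_or_ne r 0 with h0 | h0
      · rw [hRdef, h0]
        simpa using mul_nonneg (sub_nonneg.2 hpc) (sub_nonneg.2 hsc)
      · have hr0 : 0 < R := by rw [hRdef]; exact norm_pos_iff.mpr h0
        have hall : ∀ t : ℝ, 0 ≤ ((c - p) * R ^ 2) * t ^ 2 + (-(2 * R ^ 3)) * t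
            + (c - s) * R ^ 2 := by
          intro t
          have := hQ ((starRingEnd ℂ) r * (t : ℂ)) ((R : ℝ) : ℂ)
          have e1 : normSq ((starRingEnd ℂ) r * (t : ℂ)) = R ^ 2 * t ^ 2 := by
            rw [_root_.map_mul, Complex.normSq_conj, Complex.normSq_ofReal, ← Complex.sq_norm, ← hRdef]
            ring
          have e2 : normSq ((R : ℝ) : ℂ) = R ^ 2 := by
            rw [Complex.normSq_ofReal]; ring
          have e3 : (r * ((starRingEnd ℂ) r * (t : ℂ) * (starRingEnd ℂ) ((R : ℝ) : ℂ))).re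
              = R ^ 3 * t := by
            rw [Complex.conj_ofReal]
            rw [show r * ((starRingEnd ℂ) r * (t : ℂ) * ((R : ℝ) : ℂ))
                = (r * (starRingEnd ℂ) r) * ((t : ℂ) * ((R : ℝ) : ℂ)) by ring]
            rw [Complex.mul_conj]
            rw [show (normSq r : ℂ) = ((R ^ 2 : ℝ) : ℂ) by
              rw [← Complex.sq_norm, ← hRdef]]
            rw [← Complex.ofReal_mul, ← Complex.ofReal_mul, Complex.ofReal_re]
            ring
          rw [e1, e2, e3] at this
          nlinarith [this]
        have hall' : ∀ x : ℝ, 0 ≤ ((c - p) * R ^ 2) * (x * x) + (-(2 * R ^ 3)) * x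
            + (c - s) * R ^ 2 := by
          intro x
          have := hall x
          nlinarith [this]
        have hdisc := discrim_le_zero hall'
        rw [discrim] at hdisc
        nlinarith [pow_pos hr0 4, pow_pos hr0 2, hdisc]
    refine ⟨?_, ?_⟩
    · nlinarith [hRc, sq_nonneg R, mul_le_mul hpc hsc hs0 hc0]
    · rw [hsum, habsΔ]
      nlinarith [hRc]
  · rintro ⟨h1, h2⟩
    have hΔ1 : Δ < 1 := by nlinarith
    have ht : p + s < 1 + Δ := by rw [hsum] at h2; nlinarith
    obtain ⟨c, hc1, hpc, hsc, hceq⟩ : ∃ c : ℝ, c < 1 ∧ p ≤ c ∧ s ≤ c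
        ∧ (c - p) * (c - s) = R ^ 2 := by
      have hg0 : 0 ≤ Real.sqrt ((p - s) ^ 2 + 4 * R ^ 2) := Real.sqrt_nonneg _
      have hg2 : Real.sqrt ((p - s) ^ 2 + 4 * R ^ 2) ^ 2 = (p - s) ^ 2 + 4 * R ^ 2 :=
        Real.sq_sqrt (by positivity)
      have hgabs : |p - s| ≤ Real.sqrt ((p - s) ^ 2 + 4 * R ^ 2) := by
        rw [← Real.sqrt_sq_eq_abs]
        exact Real.sqrt_le_sqrt (by nlinarith [sq_nonneg R])
      have habs1 : p - s ≤ |p - s| := le_abs_self _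
      have habs2 : s - p ≤ |p - s| := by rw [abs_sub_comm]; exact le_abs_self _
      refine ⟨(p + s + Real.sqrt ((p - s) ^ 2 + 4 * R ^ 2)) / 2, ?_, by linarith, by linarith, ?_⟩
      · nlinarith [hg2, hg0, hident, ht, hΔ1]
      · nlinarith [hg2]
    have hc0 : 0 ≤ c := le_trans hp0 hpc
    have hTle : ‖T‖ ≤ Real.sqrt c := by
      apply ContinuousLinearMap.opNorm_le_bound _ (Real.sqrt_nonneg c)
      intro x
      have hx : x = (WithLp.equiv 2 (Fin 2 → ℂ)).symm ![x 0, x 1] := by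
        ext i; fin_cases i <;> rfl
      rw [hx]
      set u := x 0 with hu
      set v := x 1 with hv
      have cross : (r * (u * (starRingEnd ℂ) v)).re ≤ R * (‖u‖ * ‖v‖) := by
        calc (r * (u * (starRingEnd ℂ) v)).re ≤ ‖r * (u * (starRingEnd ℂ) v)‖ :=
              Complex.re_le_norm _
          _ = R * (‖u‖ * ‖v‖) := by
              rw [norm_mul, norm_mul, Complex.norm_conj, hRdef]
      have quad := quad_aux' (c - p) (c - s) R (‖u‖) (‖v‖)
        (by linarith) (by linarith) (norm_nonneg _) (norm_nonneg _)
        (le_of_eq hceq.symm)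
      have hq : ‖T ((WithLp.equiv 2 (Fin 2 → ℂ)).symm ![u, v])‖ ^ 2
          ≤ c * ‖(WithLp.equiv 2 (Fin 2 → ℂ)).symm ![u, v]‖ ^ 2 := by
        rw [hT, Qval', norm_symm_sq']
        simp only [Matrix.cons_val_zero, Matrix.cons_val_one, Matrix.head_cons]
        rw [Complex.sq_norm, Complex.sq_norm]
        rw [← hpdef, ← hsdef, ← hrdef]
        have hU2 : normSq u = ‖u‖ ^ 2 := (Complex.sq_norm u).symm
        have hV2 : normSq v = ‖v‖ ^ 2 := (Complex.sq_norm v).symm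
        rw [hU2, hV2]
        nlinarith [cross, quad]
      have h0 : 0 ≤ ‖T ((WithLp.equiv 2 (Fin 2 → ℂ)).symm ![u, v])‖ := norm_nonneg _
      have h1' : ‖T ((WithLp.equiv 2 (Fin 2 → ℂ)).symm ![u, v])‖ ^ 2
          ≤ (Real.sqrt c * ‖(WithLp.equiv 2 (Fin 2 → ℂ)).symm ![u, v]‖) ^ 2 := by
        rw [mul_pow, Real.sq_sqrt hc0]; exact hq
      nlinarith [h0, mul_nonneg (Real.sqrt_nonneg c)
        (norm_nonneg ((WithLp.equiv 2 (Fin 2 → ℂ)).symm ![u, v])), h1']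
    calc ‖T‖ ≤ Real.sqrt c := hTle
      _ < 1 := by
          rw [show (1 : ℝ) = Real.sqrt 1 by simp]
          exact Real.sqrt_lt_sqrt hc0 (by simpa using hc1)

/-- Equivalence of conditions (6) and (9): existence of a symmetric contractive
2×2 matrix with prescribed diagonal and determinant. -/
theorem cond6_iff_symmetric_matrix (C : ℝ) (hC : 0 < C) (y₁ y₂ q : ℂ) :
    (‖q‖ < 1 ∧
      (‖y₁‖)^2 + (‖y₂‖)^2 - C^2 * (‖q‖)^2
        + 2 * ‖y₁ * y₂ - (C : ℂ)^2 * q‖ < C^2) ↔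
    (∃ B : Matrix (Fin 2) (Fin 2) ℂ,
      ‖Matrix.toEuclideanCLM (𝕜 := ℂ) B‖ < 1 ∧
      B 0 0 = y₁ / (C : ℂ) ∧ B 1 1 = y₂ / (C : ℂ) ∧
      B 0 1 = B 1 0 ∧ B.det = q) := by
  have hCne : (C : ℂ) ≠ 0 := Complex.ofReal_ne_zero.2 (ne_of_gt hC)
  have hCabs : ‖((C : ℝ) : ℂ)‖ = C := by
    rw [Complex.norm_real, Real.norm_eq_abs, abs_of_pos hC]
  have hC2 : (0 : ℝ) < C ^ 2 := by positivity
  constructor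
  · rintro ⟨hq1, hq2⟩
    set a := y₁ / (C : ℂ) with ha
    set d := y₂ / (C : ℂ) with hd
    obtain ⟨b, hb⟩ : ∃ b : ℂ, b ^ 2 = a * d - q :=
      IsAlgClosed.exists_pow_nat_eq (a * d - q) two_pos
    have hq' : a * d - b ^ 2 = q := by rw [hb]; ring
    refine ⟨!![a, b; b, d], ?_, by simp, by simp, by simp, ?_⟩
    · apply (core' a b d).mpr
      rw [hq']
      refine ⟨hq1, ?_⟩
      have ea : ‖y₁‖ = C * ‖a‖ := by
        rw [ha, norm_div, hCabs]
        field_simp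
      have ed : ‖y₂‖ = C * ‖d‖ := by
        rw [hd, norm_div, hCabs]
        field_simp
      have eb : ‖y₁ * y₂ - (C : ℂ) ^ 2 * q‖ = C ^ 2 * ‖b‖ ^ 2 := by
        have e : y₁ * y₂ - (C : ℂ) ^ 2 * q = (C : ℂ) ^ 2 * b ^ 2 := by
          rw [hb, ha, hd]
          field_simp
        rw [e, norm_mul, norm_pow, norm_pow, hCabs]
      rw [ea, ed, eb] at hq2
      nlinarith [hq2, hC2]
    · rw [Matrix.det_fin_two_of]
      linear_combination -hb
  · rintro ⟨B, hn, h00, h11, hsym, hdet⟩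
    have hBeta : B = !![B 0 0, B 0 1; B 1 0, B 1 1] := Matrix.eta_fin_two B
    set a := B 0 0 with ha'
    set d := B 1 1 with hd'
    set b := B 1 0 with hb'
    rw [hsym] at hBeta
    rw [hBeta] at hn hdet
    rw [Matrix.det_fin_two_of] at hdet
    have hq' : a * d - b ^ 2 = q := by linear_combination hdet
    obtain ⟨h1, h2⟩ := (core' a b d).mp hn
    rw [hq'] at h1 h2
    have ea : ‖y₁‖ = C * ‖a‖ := by
      have : y₁ = (C : ℂ) * a := by rw [h00]; field_simp
      rw [this, norm_mul, hCabs]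
    have ed : ‖y₂‖ = C * ‖d‖ := by
      have : y₂ = (C : ℂ) * d := by rw [h11]; field_simp
      rw [this, norm_mul, hCabs]
    have eb : ‖y₁ * y₂ - (C : ℂ) ^ 2 * q‖ = C ^ 2 * ‖b‖ ^ 2 := by
      have e : y₁ * y₂ - (C : ℂ) ^ 2 * q = (C : ℂ) ^ 2 * b ^ 2 := by
        have e1 : y₁ = (C : ℂ) * a := by rw [h00]; field_simp
        have e2 : y₂ = (C : ℂ) * d := by rw [h11]; field_simp
        rw [e1, e2, ← hq']
        ring
      rw [e, norm_mul, norm_pow, norm_pow, hCabs]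
    refine ⟨h1, ?_⟩
    rw [ea, ed, eb]
    nlinarith [h2, hC2]
end

section
/- Let C > 0 and y₁, y₂, q ∈ ℂ, and suppose there exists a 2×2 complex matrix B with ‖B‖ < 1, B₁₁ = y₁/C, B₂₂ = y₂/C, and det B = q. Then |q| < 1 and |y₁|² + |y₂|² - C²|q|² + 2|y₁y₂ - C²q| < C². -/
open Complex Matrix

/-- Strict contraction on concrete vectors. -/
lemma contr_aux (B : Matrix (Fin 2) (Fin 2) ℂ)
    (hB : ‖Matrix.toEuclideanCLM (𝕜 := ℂ) B‖ < 1) (x : Fin 2 → ℂ) (hx : x ≠ 0) :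
    Complex.normSq ((B *ᵥ x) 0) + Complex.normSq ((B *ᵥ x) 1)
      < Complex.normSq (x 0) + Complex.normSq (x 1) := by
  set T := Matrix.toEuclideanCLM (𝕜 := ℂ) B
  set v : EuclideanSpace ℂ (Fin 2) := (WithLp.equiv 2 (Fin 2 → ℂ)).symm x
  have hv : v ≠ 0 := by
    simpa [v] using hx
  have h1 : ‖T v‖ < ‖v‖ := by
    calc ‖T v‖ ≤ ‖T‖ * ‖v‖ := T.le_opNorm v
    _ < 1 * ‖v‖ := by
        apply mul_lt_mul_of_pos_right hB (norm_pos_iff.mpr hv)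
    _ = ‖v‖ := one_mul _
  have h2 : ‖T v‖ ^ 2 < ‖v‖ ^ 2 := by
    exact pow_lt_pow_left₀ h1 (norm_nonneg _) two_ne_zero
  have hTv : T v = (WithLp.equiv 2 (Fin 2 → ℂ)).symm (B *ᵥ x) := by
    simp [T, v, Matrix.toEuclideanCLM_toLp, Matrix.toLin'_apply]
  rw [hTv] at h2
  have norm_sq : ∀ y : Fin 2 → ℂ,
      ‖(WithLp.equiv 2 (Fin 2 → ℂ)).symm y‖ ^ 2 = Complex.normSq (y 0) + Complex.normSq (y 1) := by
    intro y
    rw [EuclideanSpace.norm_eq]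
    rw [Real.sq_sqrt (by positivity)]
    simp [Fin.sum_univ_two, Complex.sq_norm]
  rw [norm_sq, norm_sq] at h2
  exact h2

set_option maxHeartbeats 1600000 in
/-- Implication (8) ⟹ (6): a contractive 2×2 matrix with prescribed diagonal and
determinant forces the inequality of condition (6). -/
theorem matrix_implies_cond6 (C : ℝ) (hC : 0 < C) (y₁ y₂ q : ℂ)
    (h : ∃ B : Matrix (Fin 2) (Fin 2) ℂ,
      ‖Matrix.toEuclideanCLM (𝕜 := ℂ) B‖ < 1 ∧
      B 0 0 = y₁ / (C : ℂ) ∧ B 1 1 = y₂ / (C : ℂ) ∧ B.det = q) :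
    ‖q‖ < 1 ∧
    (‖y₁‖)^2 + (‖y₂‖)^2 - C^2 * (‖q‖)^2
      + 2 * ‖y₁ * y₂ - (C : ℂ)^2 * q‖ < C^2 := by
  obtain ⟨B, hB, h00, h11, hdet⟩ := h
  set a := B 0 0 with ha'
  set b := B 0 1 with hb'
  set c := B 1 0 with hc'
  set d := B 1 1 with hd'
  have hq : q = a * d - b * c := by rw [← hdet, Matrix.det_fin_two]
  have hmv : ∀ x : Fin 2 → ℂ,
      (B *ᵥ x) 0 = a * x 0 + b * x 1 ∧ (B *ᵥ x) 1 = c * x 0 + d * x 1 := by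
    intro x
    constructor <;> simp [Matrix.mulVec, dotProduct, Fin.sum_univ_two] <;> rfl
  -- column bounds
  have f1 : Complex.normSq a + Complex.normSq c < 1 := by
    have := contr_aux B hB ![1, 0] (by
      intro hcon
      simpa using congrFun hcon 0)
    obtain ⟨e0, e1⟩ := hmv ![1, 0]
    rw [e0, e1] at this
    simpa using this
  have f2 : Complex.normSq b + Complex.normSq d < 1 := by
    have := contr_aux B hB ![0, 1] (by
      intro hcon
      simpa using congrFun hcon 1)
    obtain ⟨e0, e1⟩ := hmv ![0, 1]
    rw [e0, e1] at this
    simpa using this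
  -- the key determinant inequality
  set μ : ℝ := 1 - Complex.normSq a - Complex.normSq c with hμ'
  have hμpos : 0 < μ := by simp only [hμ']; linarith
  set x0 : ℂ := (starRingEnd ℂ) a * b + (starRingEnd ℂ) c * d with hx0'
  have key : Complex.normSq x0 + Complex.normSq ((μ : ℝ) : ℂ)
      - (Complex.normSq (a * x0 + b * (μ : ℂ)) + Complex.normSq (c * x0 + d * (μ : ℂ)))
      = μ * (1 - Complex.normSq a - Complex.normSq b - Complex.normSq c - Complex.normSq d
          + Complex.normSq (a * d - b * c)) := by
    apply Complex.ofReal_injective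
    push_cast
    simp only [← Complex.mul_conj, hx0', hμ']
    push_cast
    simp only [_root_.map_mul, _root_.map_add, _root_.map_sub, _root_.map_one, Complex.conj_conj, Complex.conj_ofReal, ← Complex.mul_conj]
    ring
  have f3 : Complex.normSq a + Complex.normSq b + Complex.normSq c + Complex.normSq d
      < 1 + Complex.normSq (a * d - b * c) := by
    have hx : (![x0, ((μ : ℝ) : ℂ)] : Fin 2 → ℂ) ≠ 0 := by
      intro hcon
      have := congrFun hcon 1
      simp at this
      exact absurd this (by exact_mod_cast hμpos.ne')
    have hlt := contr_aux B hB ![x0, ((μ : ℝ) : ℂ)] hx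
    obtain ⟨e0, e1⟩ := hmv ![x0, ((μ : ℝ) : ℂ)]
    rw [e0, e1] at hlt
    simp only [Matrix.cons_val_zero, Matrix.cons_val_one, Matrix.head_cons] at hlt
    nlinarith [key, hμpos]
  -- translate to abs
  set α := ‖a‖
  set β := ‖b‖
  set γ := ‖c‖
  set δ := ‖d‖
  have hns : ∀ z : ℂ, Complex.normSq z = (‖z‖) ^ 2 := fun z => (Complex.sq_norm z).symm
  simp only [hns] at f1 f2 f3
  have hQ2 : ‖q‖ ^ 2 = ‖a * d - b * c‖ ^ 2 := by rw [hq]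
  have habs_nonneg : 0 ≤ ‖q‖ := norm_nonneg q
  have hqle : ‖q‖ ≤ α * δ + β * γ := by
    calc ‖q‖ = ‖a * d - b * c‖ := by rw [hq]
    _ ≤ ‖a * d‖ + ‖b * c‖ := by
        simpa using norm_sub_le (a * d) (b * c)
    _ = α * δ + β * γ := by rw [norm_mul, norm_mul]
  have hαβγδ : 0 ≤ α ∧ 0 ≤ β ∧ 0 ≤ γ ∧ 0 ≤ δ :=
    ⟨norm_nonneg _, norm_nonneg _, norm_nonneg _, norm_nonneg _⟩
  obtain ⟨hα, hβ, hγ, hδ⟩ := hαβγδ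
  have goal1 : ‖q‖ < 1 := by
    nlinarith [sq_nonneg (α * β - γ * δ), sq_nonneg (‖q‖ - 1)]
  refine ⟨goal1, ?_⟩
  -- rewrite y's
  have hCne : (C : ℂ) ≠ 0 := by exact_mod_cast hC.ne'
  have hy1 : y₁ = (C : ℂ) * a := by rw [h00]; field_simp
  have hy2 : y₂ = (C : ℂ) * d := by rw [h11]; field_simp
  have hprod : y₁ * y₂ - (C : ℂ) ^ 2 * q = (C : ℂ) ^ 2 * (b * c) := by
    rw [hy1, hy2, hq]; ring
  have e1 : ‖y₁‖ = C * α := by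
    rw [hy1, norm_mul, Complex.norm_real, Real.norm_eq_abs, abs_of_pos hC]
  have e2 : ‖y₂‖ = C * δ := by
    rw [hy2, norm_mul, Complex.norm_real, Real.norm_eq_abs, abs_of_pos hC]
  have e3 : ‖y₁ * y₂ - (C : ℂ) ^ 2 * q‖ = C ^ 2 * (β * γ) := by
    rw [hprod, norm_mul, norm_mul, norm_pow, Complex.norm_real, Real.norm_eq_abs, abs_of_pos hC]
  rw [e1, e2, e3]
  have core : α ^ 2 + δ ^ 2 - ‖q‖ ^ 2 + 2 * (β * γ) < 1 := by
    rw [hq]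
    nlinarith [sq_nonneg (β - γ)]
  nlinarith [sq_nonneg C, mul_pos hC hC]
end

section
/- The closed extended symmetrized polydisc Γ̃ₙ is not circled: the point y = (binom(n,1), binom(n,2), …, binom(n,n−1), 1) lies in Γ̃ₙ, but iy = (i·binom(n,1), …, i·binom(n,n−1), i) does not lie in Γ̃ₙ. -/
/-- Membership in the closed extended symmetrized polydisc `Γ̃ₙ`. -/
def inClosedExt (n : ℕ) (y : Fin (n - 1) → ℂ) (q : ℂ) : Prop :=
  ‖q‖ ≤ 1 ∧ ∃ β : Fin (n - 1) → ℂ, ∀ j : Fin (n - 1),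
    y j = β j + (starRingEnd ℂ) (β j.rev) * q ∧
    ‖β j‖ + ‖β j.rev‖ ≤ (n.choose (j.val + 1) : ℝ)

/-- `Γ̃ₙ` is not circled: `(binom(n,1),…,binom(n,n−1),1) ∈ Γ̃ₙ` but multiplying every
coordinate by `i` gives a point outside `Γ̃ₙ`. -/
theorem closedExt_not_circled (n : ℕ) (hn : 2 ≤ n) :
    inClosedExt n (fun j => (n.choose (j.val + 1) : ℂ)) 1 ∧
    ¬ inClosedExt n (fun j => Complex.I * (n.choose (j.val + 1) : ℂ)) Complex.I := by
  constructor
  · refine ⟨by simp, fun j => (n.choose (j.val + 1) : ℂ) / 2, fun j => ?_⟩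
    have hrev : j.rev.val + 1 = n - (j.val + 1) := by
      have := j.isLt
      simp [Fin.rev]
      omega
    have hsymm : n.choose (j.rev.val + 1) = n.choose (j.val + 1) := by
      rw [hrev, Nat.choose_symm (by have := j.isLt; omega)]
    beta_reduce
    constructor
    · rw [hsymm]
      simp [map_div₀, map_natCast, map_ofNat]
    · rw [hsymm]
      rw [norm_div, Complex.norm_natCast, Complex.norm_two]
      linarith
  · rintro ⟨hq, β, hβ⟩
    have h0 : 0 < n - 1 := by omega
    set j0 : Fin (n - 1) := ⟨0, h0⟩ with hj0def
    obtain ⟨e1, -⟩ := hβ j0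
    obtain ⟨e2, -⟩ := hβ j0.rev
    rw [Fin.rev_rev] at e2
    have hc1 : n.choose (j0.val + 1) = n := by simp [hj0def]
    have hr : j0.rev.val + 1 = n - 1 := by
      simp [hj0def, Fin.rev]
      omega
    have hc2 : n.choose (j0.rev.val + 1) = n := by
      rw [hr, Nat.choose_symm (by omega : 1 ≤ n), Nat.choose_one_right]
    beta_reduce at e1 e2
    rw [hc1] at e1
    rw [hc2] at e2
    have e1c := congrArg (starRingEnd ℂ) e1
    simp only [map_mul, map_add, Complex.conj_I, map_natCast, Complex.conj_conj] at e1c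
    have key : Complex.I * (n : ℂ) = (n : ℂ) := by
      linear_combination e2 - Complex.I * e1c + (β j0.rev - (n:ℂ)) * Complex.I_sq
    have hn0 : (n : ℂ) ≠ 0 := by
      exact_mod_cast Nat.cast_ne_zero.mpr (by omega)
    have hI : Complex.I = 1 :=
      mul_right_cancel₀ hn0 (key.trans (one_mul (n : ℂ)).symm)
    norm_num [Complex.ext_iff] at hI
end

section
/- Starlikeness estimate: let C > 0, y₁, y₂, q ∈ ℂ with |y₂| ≤ C, and 0 ≤ r < 1. If |C − zy₂|² − |y₁ − Czq|² ≥ 0 for all z in the closed unit disc, then |C − rzy₂|² − |ry₁ − Crzq|² > 0 for all z in the closed unit disc. Consequently Γ̃ₙ is starlike about the origin and rΓ̃ₙ ⊆ G̃ₙ for 0 ≤ r < 1. -/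
/-- Membership in the open extended symmetrized polydisc `G̃ₙ`. -/
def inOpenExt (n : ℕ) (y : Fin (n - 1) → ℂ) (q : ℂ) : Prop :=
  ‖q‖ < 1 ∧ ∃ β : Fin (n - 1) → ℂ, ∀ j : Fin (n - 1),
    y j = β j + (starRingEnd ℂ) (β j.rev) * q ∧
    ‖β j‖ + ‖β j.rev‖ < (n.choose (j.val + 1) : ℝ)

lemma open_to_closed {n : ℕ} {y : Fin (n-1) → ℂ} {q : ℂ}
    (h : inOpenExt n y q) : inClosedExt n y q := by
  obtain ⟨hq, β, hβ⟩ := h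
  exact ⟨hq.le, β, fun j => ⟨(hβ j).1, (hβ j).2.le⟩⟩

lemma scale_mem (n : ℕ) (r : ℝ) (hr0 : 0 ≤ r) (hr1 : r < 1)
    (y : Fin (n-1) → ℂ) (q : ℂ) (h : inClosedExt n y q) :
    inOpenExt n (fun j => (r : ℂ) * y j) ((r : ℂ) * q) := by
  obtain ⟨hq, β, hβ⟩ := h
  set s := ‖q‖ with hs_def
  have hs0 : 0 ≤ s := norm_nonneg q
  have hrs : r * s < 1 := lt_of_le_of_lt (mul_le_of_le_one_right hr0 hq) hr1
  have hD : (0:ℝ) < 1 - r^2*s^2 := by nlinarith [mul_nonneg hr0 hs0]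
  have hDne : (1 - r^2*s^2 : ℝ) ≠ 0 := hD.ne'
  set a := (r - r^2*s^2)/(1 - r^2*s^2) with ha_def
  set b := (r - r^2)/(1 - r^2*s^2) with hb_def
  have ha0 : 0 ≤ a := div_nonneg (by nlinarith [mul_nonneg hr0 hs0]) hD.le
  have hb0 : 0 ≤ b := div_nonneg (by nlinarith) hD.le
  have hab : a + b*s < 1 := by
    rw [ha_def, hb_def, div_mul_eq_mul_div, ← add_div, div_lt_one hD]
    nlinarith [mul_nonneg hr0 hs0]
  have ha : a + r*b*s^2 = r := by
    rw [ha_def, hb_def]; field_simp; ring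
  have hb : b + r*a = r := by
    rw [ha_def, hb_def]; field_simp; ring
  have haC : (a:ℂ) + (r:ℂ)*(b:ℂ)*((s:ℂ))^2 = (r:ℂ) := by exact_mod_cast congrArg Complex.ofReal ha
  have hbC : (b:ℂ) + (r:ℂ)*(a:ℂ) = (r:ℂ) := by exact_mod_cast congrArg Complex.ofReal hb
  have hqq : (starRingEnd ℂ) q * q = ((s:ℂ))^2 := by
    rw [mul_comm, Complex.mul_conj]
    norm_cast
    exact (Complex.sq_norm q).symm
  refine ⟨?_, fun j => (a:ℂ) * β j + (b:ℂ) * (starRingEnd ℂ) (β j.rev) * q, fun j => ⟨?_, ?_⟩⟩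
  · rw [norm_mul, Complex.norm_real, Real.norm_eq_abs, abs_of_nonneg hr0]
    exact lt_of_le_of_lt (mul_le_of_le_one_right hr0 hq) hr1
  · obtain ⟨hyj, _⟩ := hβ j
    dsimp only
    rw [hyj]
    simp only [Fin.rev_rev, map_add, map_mul, Complex.conj_conj, Complex.conj_ofReal]
    linear_combination (-(β j)) * haC - ((starRingEnd ℂ) (β j.rev) * q) * hbC
      - ((b:ℂ)*(r:ℂ)*(β j)) * hqq
  · obtain ⟨_, hbd⟩ := hβ j
    dsimp only
    have hC : (0:ℝ) < (n.choose (j.val+1) : ℝ) := by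
      exact_mod_cast Nat.choose_pos (by omega : j.val+1 ≤ n)
    have t1 : ‖(a:ℂ) * β j + (b:ℂ) * (starRingEnd ℂ) (β j.rev) * q‖
        ≤ a * ‖β j‖ + b * ‖β j.rev‖ * s := by
      refine (norm_add_le _ _).trans ?_
      simp [norm_mul, Complex.norm_real, abs_of_nonneg ha0, abs_of_nonneg hb0,
        Complex.norm_conj, mul_assoc, ← hs_def]
    have t2 : ‖(a:ℂ) * β j.rev + (b:ℂ) * (starRingEnd ℂ) (β j.rev.rev) * q‖
        ≤ a * ‖β j.rev‖ + b * ‖β j‖ * s := by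
      simp only [Fin.rev_rev]
      refine (norm_add_le _ _).trans ?_
      simp [norm_mul, Complex.norm_real, abs_of_nonneg ha0, abs_of_nonneg hb0,
        Complex.norm_conj, mul_assoc, ← hs_def]
    have habs0 : 0 ≤ a + b*s := add_nonneg ha0 (mul_nonneg hb0 hs0)
    nlinarith [t1, t2, hbd, hC, hab, habs0,
      mul_le_mul_of_nonneg_left hbd habs0,
      mul_lt_mul_of_pos_right hab hC]

/-- Starlikeness estimate for `Γ̃ₙ`, together with the consequences that `Γ̃ₙ` is
starlike about the origin and `r·Γ̃ₙ ⊆ G̃ₙ` for `0 ≤ r < 1`. -/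
theorem starlike_estimate (C : ℝ) (hC : 0 < C) (y₁ y₂ q : ℂ)
    (hy₂ : ‖y₂‖ ≤ C) (r : ℝ) (hr0 : 0 ≤ r) (hr1 : r < 1)
    (h : ∀ z : ℂ, ‖z‖ ≤ 1 →
      0 ≤ (‖(C : ℂ) - z * y₂‖)^2 - (‖y₁ - (C : ℂ) * z * q‖)^2) :
    (∀ z : ℂ, ‖z‖ ≤ 1 →
      0 < (‖(C : ℂ) - (r : ℂ) * z * y₂‖)^2
        - (‖(r : ℂ) * y₁ - (C : ℂ) * (r : ℂ) * z * q‖)^2) ∧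
    (∀ n : ℕ, 2 ≤ n → ∀ y : (Fin (n - 1) → ℂ) × ℂ, inClosedExt n y.1 y.2 →
      inOpenExt n (fun j => (r : ℂ) * y.1 j) ((r : ℂ) * y.2)) ∧
    (∀ n : ℕ, 2 ≤ n →
      StarConvex ℝ (0 : (Fin (n - 1) → ℂ) × ℂ)
        {p : (Fin (n - 1) → ℂ) × ℂ | inClosedExt n p.1 p.2}) := by
  refine ⟨?_, ?_, ?_⟩
  · intro z hz
    have hA := h z hz
    set w := z * y₂ with hw_def
    have hw : ‖w‖ ≤ C := by
      rw [hw_def, norm_mul]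
      calc ‖z‖ * ‖y₂‖ ≤ 1 * C :=
            mul_le_mul hz hy₂ (norm_nonneg _) zero_le_one
        _ = C := one_mul C
    have hwre : w.re ≤ C := le_trans (le_trans (le_abs_self _) (Complex.abs_re_le_norm w)) hw
    have e1 : (‖(C:ℂ) - w‖)^2
        = C^2 - 2*C*w.re + (‖w‖)^2 := by
      rw [Complex.sq_norm, Complex.sq_norm, Complex.normSq_apply, Complex.normSq_apply]
      simp [Complex.sub_re, Complex.sub_im, Complex.ofReal_re, Complex.ofReal_im]
      ring
    have e2 : (‖(C:ℂ) - (r:ℂ) * z * y₂‖)^2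
        = C^2 - 2*r*C*w.re + r^2*(‖w‖)^2 := by
      have : (C:ℂ) - (r:ℂ) * z * y₂ = (C:ℂ) - (r:ℂ) * w := by rw [hw_def]; ring
      rw [this, Complex.sq_norm, Complex.sq_norm, Complex.normSq_apply, Complex.normSq_apply]
      simp [Complex.sub_re, Complex.sub_im, Complex.mul_re, Complex.mul_im,
        Complex.ofReal_re, Complex.ofReal_im]
      ring
    have e3 : ‖(r:ℂ) * y₁ - (C:ℂ) * (r:ℂ) * z * q‖
        = r * ‖y₁ - (C:ℂ) * z * q‖ := by
      rw [show (r:ℂ) * y₁ - (C:ℂ) * (r:ℂ) * z * q = (r:ℂ) * (y₁ - (C:ℂ) * z * q) by ring,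
        norm_mul, Complex.norm_real, Real.norm_eq_abs, abs_of_nonneg hr0]
    rw [e1] at hA
    rw [e2, e3, mul_pow]
    nlinarith [mul_nonneg (mul_nonneg hr0 hr0) hA,
      mul_nonneg (mul_nonneg (mul_nonneg (sub_nonneg.2 hr1.le) hr0) hC.le)
        (sub_nonneg.2 hwre),
      mul_pos (mul_pos (sub_pos.2 hr1) (sub_pos.2 hr1)) (mul_pos hC hC)]
  · intro n _ p hp
    exact scale_mem n r hr0 hr1 p.1 p.2 hp
  · intro n _
    intro p hp a b ha hb hab
    simp only [smul_zero, zero_add, Set.mem_setOf_eq]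
    have hb1 : b ≤ 1 := by linarith
    rcases eq_or_lt_of_le hb1 with h1 | h1
    · rw [h1, one_smul]; exact hp
    · have hm := open_to_closed (scale_mem n b hb h1 p.1 p.2 hp)
      have h1' : (b • p).1 = fun j => (b:ℂ) * p.1 j := by
        funext j
        simp [Prod.smul_fst, Pi.smul_apply, Complex.real_smul]
      have h2' : (b • p).2 = (b:ℂ) * p.2 := by
        simp [Prod.smul_snd, Complex.real_smul]
      rw [h1', h2']
      exact hm
end

section
/- Schwarz lemma for G̃ₙ (necessity): let λ₀ ∈ 𝔻 \ {0} and y⁰ = (y₁⁰,…,y_{n−1}⁰,q⁰) ∈ G̃ₙ. If there exists an analytic function ψ : 𝔻 → G̃ₙ with ψ(0) = (0,…,0) and ψ(λ₀) = y⁰, then for every j = 1,…,n−1, sup_{z ∈ 𝔻} |(binom(n,j)q⁰z − y_j⁰)/(y_{n−j}⁰z − binom(n,j))| ≤ |λ₀|. -/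
lemma key_normSq (a q w : ℂ) :
    Complex.normSq (w - a * (starRingEnd ℂ) q) - Complex.normSq (q * w - a)
      = (1 - Complex.normSq q) * (Complex.normSq w - Complex.normSq a) := by
  simp only [Complex.normSq_apply, Complex.mul_re, Complex.mul_im, Complex.sub_re,
    Complex.sub_im, Complex.conj_re, Complex.conj_im]
  ring

lemma key_ineq (a q w : ℂ) (hq : ‖q‖ ≤ 1) (haw : ‖a‖ ≤ ‖w‖) :
    ‖q * w - a‖ ≤ ‖w - a * (starRingEnd ℂ) q‖ := by
  have h1 : Complex.normSq (q * w - a) ≤ Complex.normSq (w - a * (starRingEnd ℂ) q) := by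
    have hq' : Complex.normSq q ≤ 1 := by
      rw [← Complex.sq_norm]; nlinarith [norm_nonneg q]
    have hw' : Complex.normSq a ≤ Complex.normSq w := by
      rw [← Complex.sq_norm, ← Complex.sq_norm]
      nlinarith [norm_nonneg a]
    nlinarith [key_normSq a q w]
  have := Real.sqrt_le_sqrt h1
  simpa [Complex.norm_def] using this

lemma yrev_lt (C : ℝ) (a b q yrev : ℂ) (hab : ‖a‖ + ‖b‖ < C)
    (hq : ‖q‖ ≤ 1) (hyrev : yrev = b + (starRingEnd ℂ) a * q) :
    ‖yrev‖ < C := by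
  calc ‖yrev‖ ≤ ‖b‖ + ‖a‖ * ‖q‖ := by
        rw [hyrev]
        refine (norm_add_le _ _).trans ?_
        simp [norm_mul]
    _ < C := by nlinarith [norm_nonneg a, norm_nonneg q]

lemma denom_pos (C : ℝ) (yrev z : ℂ) (hyrev : ‖yrev‖ < C)
    (hz : ‖z‖ ≤ 1) : 0 < ‖yrev * z - (C : ℂ)‖ := by
  have h1 : ‖yrev * z‖ < C := by
    rw [norm_mul]
    nlinarith [norm_nonneg yrev, norm_nonneg z]
  have h2 : ‖(C : ℂ)‖ - ‖yrev * z‖ ≤ ‖yrev * z - C‖ := by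
    have h3 := abs_norm_sub_norm_le (C : ℂ) (yrev * z)
    rw [norm_sub_rev (C:ℂ)] at h3
    calc ‖(C : ℂ)‖ - ‖yrev * z‖
        ≤ |‖(C : ℂ)‖ - ‖yrev * z‖| := le_abs_self _
      _ ≤ _ := h3
  have hC : (0:ℝ) ≤ C := le_of_lt (lt_of_le_of_lt (norm_nonneg _) hyrev)
  rw [Complex.norm_of_nonneg hC] at h2
  linarith

lemma interior_bound (C : ℝ) (a b q yj yrev : ℂ)
    (hab : ‖a‖ + ‖b‖ < C) (hq : ‖q‖ ≤ 1)
    (hyj : yj = a + (starRingEnd ℂ) b * q) (hyrev : yrev = b + (starRingEnd ℂ) a * q) :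
    ∀ z : ℂ, ‖z‖ ≤ 1 →
      ‖(C : ℂ) * q * z - yj‖ ≤ ‖yrev * z - (C : ℂ)‖ := by
  have hC : (0:ℝ) < C := lt_of_le_of_lt (by positivity) hab
  have hyr : ‖yrev‖ < C := yrev_lt C a b q yrev hab hq hyrev
  -- denominator nonzero on the closed ball
  have hden : ∀ z : ℂ, ‖z‖ ≤ 1 → yrev * z - (C : ℂ) ≠ 0 := fun z hz =>
    norm_ne_zero_iff.mp (ne_of_gt (denom_pos C yrev z hyr hz))
  set g : ℂ → ℂ := fun z => ((C : ℂ) * q * z - yj) / (yrev * z - (C : ℂ)) with hg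
  -- boundary estimate
  have hbdry : ∀ z : ℂ, ‖z‖ = 1 →
      ‖(C : ℂ) * q * z - yj‖ ≤ ‖yrev * z - (C : ℂ)‖ := by
    intro z hz
    set w : ℂ := (C : ℂ) * z - (starRingEnd ℂ) b with hw
    have hnum : (C : ℂ) * q * z - yj = q * w - a := by rw [hyj, hw]; ring
    have hzz : (starRingEnd ℂ) z * z = 1 := by
      rw [mul_comm, Complex.mul_conj]
      norm_cast
      rw [← Complex.sq_norm, hz]; norm_num
    have hdabs : ‖yrev * z - (C : ℂ)‖ = ‖w - a * (starRingEnd ℂ) q‖ := by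
      have e1 : ‖yrev * z - (C : ℂ)‖
          = ‖(starRingEnd ℂ) (yrev * z - (C : ℂ)) * z‖ := by
        rw [norm_mul, Complex.norm_conj, hz, mul_one]
      rw [e1]
      have e2 : (starRingEnd ℂ) (yrev * z - (C : ℂ)) * z = -(w - a * (starRingEnd ℂ) q) := by
        rw [hyrev, hw]
        simp only [map_sub, map_mul, map_add, Complex.conj_conj, Complex.conj_ofReal]
        have : (starRingEnd ℂ) b * ((starRingEnd ℂ) z * z)
            + a * (starRingEnd ℂ) q * ((starRingEnd ℂ) z * z) - (C:ℂ) * z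
            = -(((C : ℂ) * z - (starRingEnd ℂ) b) - a * (starRingEnd ℂ) q) := by
          rw [hzz]; ring
        rw [← this]; ring
      rw [e2, norm_neg]
    have haw : ‖a‖ ≤ ‖w‖ := by
      have h2 : ‖(C : ℂ) * z‖ - ‖(starRingEnd ℂ) b‖
          ≤ ‖w‖ := by
        have h3 := abs_norm_sub_norm_le ((C : ℂ) * z) ((starRingEnd ℂ) b)
        calc ‖(C : ℂ) * z‖ - ‖(starRingEnd ℂ) b‖
            ≤ |‖(C : ℂ) * z‖ - ‖(starRingEnd ℂ) b‖| := le_abs_self _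
          _ ≤ _ := h3
      rw [norm_mul, Complex.norm_of_nonneg hC.le, hz, mul_one,
        Complex.norm_conj] at h2
      linarith
    rw [hnum, hdabs]
    exact key_ineq a q w hq haw
  -- maximum modulus
  intro z hz
  have hgb : ‖g z‖ ≤ 1 := by
    apply Complex.norm_le_of_forall_mem_frontier_norm_le (U := Metric.ball (0:ℂ) 1)
      Metric.isBounded_ball
    · apply DifferentiableOn.diffContOnCl
      intro w hw
      rw [closure_ball (0:ℂ) one_ne_zero] at hw
      have hw1 : ‖w‖ ≤ 1 := by
        simpa using mem_closedBall_zero_iff.mp hw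
      refine DifferentiableAt.differentiableWithinAt
        (DifferentiableAt.div ?_ ?_ (hden w hw1)) <;> fun_prop
    · intro w hw
      rw [frontier_ball (0:ℂ) one_ne_zero, mem_sphere_zero_iff_norm] at hw
      have hw1 : ‖w‖ = 1 := hw
      have hd := denom_pos C yrev w hyr hw1.le
      rw [hg]
      simp only [norm_div]
      rw [div_le_one hd]
      exact hbdry w hw1
    · rw [closure_ball (0:ℂ) one_ne_zero, mem_closedBall_zero_iff]
      exact hz
  have hd := denom_pos C yrev z hyr hz
  rw [hg] at hgb
  simp only [norm_div] at hgb
  rw [div_le_one hd] at hgb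
  exact hgb

/-- Schwarz lemma for `G̃ₙ` (necessity): an interpolating function forces
`sup_{z∈𝔻} |Φⱼ(z, y⁰)| ≤ |lam₀|` for every `j`. -/
theorem schwarz_lemma_extended_necessity (n : ℕ) (hn : 2 ≤ n)
    (ψ : ℂ → (Fin (n - 1) → ℂ) × ℂ)
    (hψ : DifferentiableOn ℂ ψ (Metric.ball (0 : ℂ) 1))
    (hmap : ∀ lam ∈ Metric.ball (0 : ℂ) 1, inOpenExt n (ψ lam).1 (ψ lam).2)
    (hzero : ψ 0 = 0)
    (lam₀ : ℂ) (hlam₀ : lam₀ ∈ Metric.ball (0 : ℂ) 1) (hlam₀' : lam₀ ≠ 0)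
    (y : (Fin (n - 1) → ℂ) × ℂ) (hval : ψ lam₀ = y) :
    ∀ j : Fin (n - 1), ∀ z : ℂ, ‖z‖ < 1 →
      ‖((n.choose (j.val + 1) : ℂ) * y.2 * z - y.1 j) /
        (y.1 j.rev * z - (n.choose (j.val + 1) : ℂ))‖ ≤ ‖lam₀‖ := by
  intro j z hz
  have hcast : (((n.choose (j.val + 1) : ℝ)) : ℂ) = (n.choose (j.val + 1) : ℂ) := by
    push_cast; ring
  set F : ℂ → ℂ := fun lam =>
      ((n.choose (j.val + 1) : ℂ) * (ψ lam).2 * z - (ψ lam).1 j) /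
        ((ψ lam).1 j.rev * z - (n.choose (j.val + 1) : ℂ)) with hF
  have key : ∀ lam ∈ Metric.ball (0 : ℂ) 1,
      ‖(n.choose (j.val + 1) : ℂ) * (ψ lam).2 * z - (ψ lam).1 j‖
        ≤ ‖(ψ lam).1 j.rev * z - (n.choose (j.val + 1) : ℂ)‖
      ∧ (0 : ℝ) < ‖(ψ lam).1 j.rev * z - (n.choose (j.val + 1) : ℂ)‖ := by
    intro lam hlam
    obtain ⟨hq, β, hβ⟩ := hmap lam hlam
    have h1 := hβ j
    have h2 := (hβ j.rev).1
    rw [Fin.rev_rev] at h2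
    have hq' : ‖(ψ lam).2‖ ≤ 1 := hq.le
    have hyr : ‖(ψ lam).1 j.rev‖ < (n.choose (j.val + 1) : ℝ) :=
      yrev_lt _ (β j) (β j.rev) (ψ lam).2 _ h1.2 hq' h2
    constructor
    · have := interior_bound (n.choose (j.val + 1) : ℝ) (β j) (β j.rev) (ψ lam).2
        ((ψ lam).1 j) ((ψ lam).1 j.rev) h1.2 hq' h1.1 h2 z hz.le
      rwa [hcast] at this
    · have := denom_pos (n.choose (j.val + 1) : ℝ) ((ψ lam).1 j.rev) z hyr hz.le
      rwa [hcast] at this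
  have hfst : DifferentiableOn ℂ (fun lam => (ψ lam).1) (Metric.ball (0 : ℂ) 1) := hψ.fst
  have hj : DifferentiableOn ℂ (fun lam => (ψ lam).1 j) (Metric.ball (0 : ℂ) 1) :=
    (differentiableOn_pi.mp hfst) j
  have hjr : DifferentiableOn ℂ (fun lam => (ψ lam).1 j.rev) (Metric.ball (0 : ℂ) 1) :=
    (differentiableOn_pi.mp hfst) j.rev
  have hFdiff : DifferentiableOn ℂ F (Metric.ball (0 : ℂ) 1) := by
    apply DifferentiableOn.div
    · exact (((differentiableOn_const _).mul hψ.snd).mul (differentiableOn_const _)).sub hj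
    · exact (hjr.mul (differentiableOn_const _)).sub (differentiableOn_const _)
    · exact fun lam hlam => norm_ne_zero_iff.mp (ne_of_gt (key lam hlam).2)
  have hF0 : F 0 = 0 := by
    rw [hF]
    simp [hzero]
  have hmaps : ∀ lam ∈ Metric.ball (0 : ℂ) 1, ‖F lam‖ ≤ 1 := by
    intro lam hlam
    rw [hF]
    simp only [norm_div]
    rw [div_le_one (key lam hlam).2]
    exact (key lam hlam).1
  have hfinal : ∀ ε : ℝ, 0 < ε → ‖F lam₀‖ ≤ (1 + ε) * ‖lam₀‖ := by
    intro ε hε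
    have hm : Set.MapsTo F (Metric.ball (0 : ℂ) 1) (Metric.ball (F 0) (1 + ε)) := by
      intro lam hlam
      rw [hF0, Metric.mem_ball, dist_zero_right]
      calc ‖F lam‖ = ‖F lam‖ := rfl
        _ ≤ 1 := hmaps lam hlam
        _ < 1 + ε := by linarith
    have h := Complex.dist_le_div_mul_dist_of_mapsTo_ball hFdiff (hm.mono_right Metric.ball_subset_closedBall) hlam₀
    rw [hF0] at h
    simpa [dist_zero_right] using h
  have hlpos : 0 < ‖lam₀‖ := norm_pos_iff.mpr hlam₀'
  have habs : ‖F lam₀‖ ≤ ‖lam₀‖ := by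
    apply le_of_forall_pos_le_add
    intro δ hδ
    have := hfinal (δ / ‖lam₀‖) (by positivity)
    calc ‖F lam₀‖ ≤ (1 + δ / ‖lam₀‖) * ‖lam₀‖ := this
      _ = ‖lam₀‖ + δ := by field_simp
  rw [hF] at habs
  simp only [hval] at habs
  exact habs
end

section
/- If (y₁, y₂, q) ∈ G̃₃ and |y₂| ≤ |y₁|, then (|3y₂ − 3ȳ₁q| + |y₁y₂ − 9q|)/(9 − |y₁|²) ≤ (|3y₁ − 3ȳ₂q| + |y₁y₂ − 9q|)/(9 − |y₂|²). -/
/-- A purely real quadratic identity used in the key estimate. -/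
lemma quad_id (a b c d M π : ℝ) (hπ : π ^ 2 = a ^ 2 + b ^ 2) :
    (M - π * (1 - (c ^ 2 + d ^ 2)) - 2 * (a * c + b * d)) ^ 2
      - ((a + a * (c ^ 2 - d ^ 2) + 2 * b * c * d - M * c) ^ 2
        + (b + 2 * a * c * d - b * (c ^ 2 - d ^ 2) - M * d) ^ 2)
    = (M - 2 * π) * (1 - (c ^ 2 + d ^ 2)) * (M - 2 * (a * c + b * d)) := by
  linear_combination ((1 - (c ^ 2 + d ^ 2)) ^ 2) * hπ

set_option maxHeartbeats 1000000 in
open Complex in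
/-- Key estimate: `|u + ū q² − M q| ≤ M − |u|(1−|q|²) − 2 Re(ū q)` when `2|u| ≤ M`, `|q| ≤ 1`. -/
lemma key_est (u q : ℂ) (M : ℝ) (hM : 2 * ‖u‖ ≤ M) (hq : ‖q‖ ≤ 1) :
    ‖u + (starRingEnd ℂ) u * q ^ 2 - (M : ℂ) * q‖
      ≤ M - ‖u‖ * (1 - Complex.normSq q) - 2 * ((starRingEnd ℂ) u * q).re := by
  have hπ0 : 0 ≤ ‖u‖ := norm_nonneg u
  have hq0 : 0 ≤ ‖q‖ := norm_nonneg q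
  have ht : Complex.normSq q = ‖q‖ ^ 2 := (Complex.sq_norm q).symm
  have hπ2 : ‖u‖ ^ 2 = u.re ^ 2 + u.im ^ 2 := by
    rw [Complex.sq_norm, Complex.normSq_apply]; ring
  have hXc : ((starRingEnd ℂ) u * q).re = u.re * q.re + u.im * q.im := by
    simp [Complex.mul_re]
  have htc : Complex.normSq q = q.re ^ 2 + q.im ^ 2 := by
    rw [Complex.normSq_apply]; ring
  have hXle : 2 * ((starRingEnd ℂ) u * q).re ≤ 2 * ‖u‖ * ‖q‖ := by
    have h1 : ((starRingEnd ℂ) u * q).re ≤ ‖(starRingEnd ℂ) u * q‖ :=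
      Complex.re_le_norm _
    have h2 : ‖(starRingEnd ℂ) u * q‖ = ‖u‖ * ‖q‖ := by
      rw [norm_mul, Complex.norm_conj]
    nlinarith [h1, h2]
  have hR : 0 ≤ M - ‖u‖ * (1 - Complex.normSq q) - 2 * ((starRingEnd ℂ) u * q).re := by
    nlinarith [mul_nonneg hπ0 (sq_nonneg (1 - ‖q‖))]
  have hMX : 0 ≤ M - 2 * ((starRingEnd ℂ) u * q).re := by
    nlinarith [mul_nonneg hπ0 (sub_nonneg.mpr hq)]
  have ht1 : Complex.normSq q ≤ 1 := by rw [ht]; nlinarith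
  have hw : Complex.normSq (u + (starRingEnd ℂ) u * q ^ 2 - (M : ℂ) * q)
      = (u.re + u.re * (q.re ^ 2 - q.im ^ 2) + 2 * u.im * q.re * q.im - M * q.re) ^ 2
        + (u.im + 2 * u.re * q.re * q.im - u.im * (q.re ^ 2 - q.im ^ 2) - M * q.im) ^ 2 := by
    simp only [Complex.normSq_apply, Complex.add_re, Complex.add_im, Complex.sub_re,
      Complex.sub_im, Complex.mul_re, Complex.mul_im, Complex.ofReal_re, Complex.ofReal_im,
      Complex.conj_re, Complex.conj_im, pow_two]
    ring
  have hkey : (M - ‖u‖ * (1 - Complex.normSq q) - 2 * ((starRingEnd ℂ) u * q).re) ^ 2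
      - (‖u + (starRingEnd ℂ) u * q ^ 2 - (M : ℂ) * q‖) ^ 2
      = (M - 2 * ‖u‖) * (1 - Complex.normSq q)
          * (M - 2 * ((starRingEnd ℂ) u * q).re) := by
    rw [Complex.sq_norm, hw, hXc, htc]
    exact quad_id u.re u.im q.re q.im M (‖u‖) hπ2
  nlinarith [norm_nonneg (u + (starRingEnd ℂ) u * q ^ 2 - (M : ℂ) * q), hkey,
    mul_nonneg (mul_nonneg (by nlinarith : (0:ℝ) ≤ M - 2 * ‖u‖)
      (by nlinarith : (0:ℝ) ≤ 1 - Complex.normSq q)) hMX]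

set_option maxHeartbeats 1000000 in
/-- If `(y₁,y₂,q) ∈ G̃₃` and `|y₂| ≤ |y₁|`, then `‖Φ₂‖ ≤ ‖Φ₁‖`. -/
theorem phi_norm_comparison (y₁ y₂ q : ℂ) (h : (y₁, y₂, q) ∈ G3ext)
    (hle : ‖y₂‖ ≤ ‖y₁‖) :
    (‖3 * y₂ - 3 * (starRingEnd ℂ) y₁ * q‖ + ‖y₁ * y₂ - 9 * q‖)
        / (9 - (‖y₁‖)^2)
      ≤ (‖3 * y₁ - 3 * (starRingEnd ℂ) y₂ * q‖ + ‖y₁ * y₂ - 9 * q‖)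
        / (9 - (‖y₂‖)^2) := by
  obtain ⟨β₁, β₂, q₀, hq₀, hβ, hp⟩ := h
  simp only [Prod.mk.injEq] at hp
  obtain ⟨hy₁, hy₂, hqq⟩ := hp
  subst hqq
  set p := ‖β₁‖ with hpdef
  set s := ‖β₂‖ with hsdef
  set t := Complex.normSq q with htdef
  have hp0 : 0 ≤ p := norm_nonneg β₁
  have hs0 : 0 ≤ s := norm_nonneg β₂
  have hq0 : 0 ≤ ‖q‖ := norm_nonneg q
  have hp2 : Complex.normSq β₁ = p ^ 2 := (Complex.sq_norm β₁).symm
  have hs2 : Complex.normSq β₂ = s ^ 2 := (Complex.sq_norm β₂).symm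
  have htsq : t = ‖q‖ ^ 2 := (Complex.sq_norm q).symm
  have ht0 : 0 ≤ t := Complex.normSq_nonneg q
  have ht1 : t < 1 := by rw [htsq]; nlinarith
  set X := 2 * ((starRingEnd ℂ) (β₁ * β₂) * q).re with hXdef
  -- normSq identities
  have ha : Complex.normSq y₁ = p ^ 2 + s ^ 2 * t + X := by
    rw [hy₁, ← hp2, ← hs2]
    simp only [Complex.normSq_apply, Complex.mul_re, Complex.mul_im, Complex.add_re,
      Complex.add_im, Complex.conj_re, Complex.conj_im, hXdef, htdef]
    ring
  have hb : Complex.normSq y₂ = s ^ 2 + p ^ 2 * t + X := by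
    rw [hy₂, ← hp2, ← hs2]
    simp only [Complex.normSq_apply, Complex.mul_re, Complex.mul_im, Complex.add_re,
      Complex.add_im, Complex.conj_re, Complex.conj_im, hXdef, htdef]
    ring
  -- s ≤ p
  have hsp : s ≤ p := by
    have h1 : Complex.normSq y₂ ≤ Complex.normSq y₁ := by
      rw [← Complex.sq_norm, ← Complex.sq_norm]; nlinarith [norm_nonneg y₂]
    have hsq : s ^ 2 ≤ p ^ 2 := by nlinarith [h1, ha, hb]
    nlinarith [hsq, mul_nonneg hp0 hs0]
  -- numerator identities
  have hB2 : ‖3 * y₂ - 3 * (starRingEnd ℂ) y₁ * q‖ = 3 * s * (1 - t) := by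
    have hid : 3 * y₂ - 3 * (starRingEnd ℂ) y₁ * q = 3 * β₂ * ((1 : ℂ) - (t : ℝ)) := by
      rw [hy₁, hy₂, htdef, ← Complex.mul_conj]
      simp only [map_add, map_mul, Complex.conj_conj]
      ring
    rw [hid, norm_mul, norm_mul]
    have h1 : ‖(1 : ℂ) - (t : ℝ)‖ = 1 - t := by
      rw [show (1 : ℂ) - (t : ℝ) = ((1 - t : ℝ) : ℂ) by push_cast; ring,
        Complex.norm_real, Real.norm_eq_abs, abs_of_nonneg (by linarith)]
    rw [h1]
    simp [hsdef]
  have hB1 : ‖3 * y₁ - 3 * (starRingEnd ℂ) y₂ * q‖ = 3 * p * (1 - t) := by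
    have hid : 3 * y₁ - 3 * (starRingEnd ℂ) y₂ * q = 3 * β₁ * ((1 : ℂ) - (t : ℝ)) := by
      rw [hy₁, hy₂, htdef, ← Complex.mul_conj]
      simp only [map_add, map_mul, Complex.conj_conj]
      ring
    rw [hid, norm_mul, norm_mul]
    have h1 : ‖(1 : ℂ) - (t : ℝ)‖ = 1 - t := by
      rw [show (1 : ℂ) - (t : ℝ) = ((1 - t : ℝ) : ℂ) by push_cast; ring,
        Complex.norm_real, Real.norm_eq_abs, abs_of_nonneg (by linarith)]
    rw [h1]
    simp [hpdef]
  -- bound on C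
  have hC : ‖y₁ * y₂ - 9 * q‖
      ≤ (9 - p ^ 2 - s ^ 2) - p * s * (1 - t) - X := by
    have hw : y₁ * y₂ - 9 * q
        = β₁ * β₂ + (starRingEnd ℂ) (β₁ * β₂) * q ^ 2 - ((9 - p ^ 2 - s ^ 2 : ℝ) : ℂ) * q := by
      rw [hy₁, hy₂, ← hp2, ← hs2]
      have e1 : ((Complex.normSq β₁ : ℝ) : ℂ) = (starRingEnd ℂ) β₁ * β₁ := by
        rw [Complex.normSq_eq_conj_mul_self]
      have e2 : ((Complex.normSq β₂ : ℝ) : ℂ) = (starRingEnd ℂ) β₂ * β₂ := by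
        rw [Complex.normSq_eq_conj_mul_self]
      push_cast
      rw [e1, e2]
      simp only [map_mul]
      ring
    rw [hw]
    have habs : ‖β₁ * β₂‖ = p * s := by rw [norm_mul]
    have h2M : 2 * ‖β₁ * β₂‖ ≤ 9 - p ^ 2 - s ^ 2 := by
      rw [habs]; nlinarith
    have hk := key_est (β₁ * β₂) q (9 - p ^ 2 - s ^ 2) h2M (le_of_lt hq₀)
    rw [habs, ← htdef, ← hXdef] at hk
    exact hk
  -- positivity of denominators
  have hay : ‖y₁‖ < 3 := by
    have h1 : ‖y₁‖ ≤ p + s * ‖q‖ := by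
      rw [hy₁]
      calc ‖β₁ + (starRingEnd ℂ) β₂ * q‖
          ≤ ‖β₁‖ + ‖(starRingEnd ℂ) β₂ * q‖ :=
            norm_add_le _ _
        _ = p + s * ‖q‖ := by rw [norm_mul, Complex.norm_conj]
    nlinarith
  have hby : ‖y₂‖ < 3 := lt_of_le_of_lt hle hay
  have hD1 : (0 : ℝ) < 9 - (‖y₁‖) ^ 2 := by nlinarith [norm_nonneg y₁]
  have hD2 : (0 : ℝ) < 9 - (‖y₂‖) ^ 2 := by nlinarith [norm_nonneg y₂]
  rw [div_le_div_iff₀ hD1 hD2]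
  rw [hB1, hB2, Complex.sq_norm, Complex.sq_norm, ha, hb]
  set C := ‖y₁ * y₂ - 9 * q‖ with hCdef
  have hC0 : 0 ≤ C := norm_nonneg _
  have t1 : 0 ≤ (p - s) * (1 - t) * ((3 - p - s) * C) :=
    mul_nonneg (mul_nonneg (by linarith) (by linarith))
      (mul_nonneg (by nlinarith) hC0)
  have t2 : 0 ≤ (p - s) * (1 - t) * ((9 - p ^ 2 - s ^ 2) - p * s * (1 - t) - X - C) :=
    mul_nonneg (mul_nonneg (by linarith) (by linarith)) (by linarith)
  have hid : (3 * p * (1 - t) + C) * (9 - (p ^ 2 + s ^ 2 * t + X))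
      - (3 * s * (1 - t) + C) * (9 - (s ^ 2 + p ^ 2 * t + X))
      = (p - s) * (1 - t) * ((3 - p - s) * C)
        + 3 * ((p - s) * (1 - t) * ((9 - p ^ 2 - s ^ 2) - p * s * (1 - t) - X - C)) := by
    ring
  linarith [t1, t2, hid]
end

section
/- Let λ₀ ∈ 𝔻 \ {0}, let C > 0, and let y₁, y₂, q ∈ ℂ with y₁y₂ ≠ C²q, |y₂| ≤ |y₁|, and (C|y₁ − ȳ₂q| + |y₁y₂ − C²q|)/(C² − |y₂|²) ≤ |λ₀| (where |y₂| < C). Let w ∈ ℂ satisfy w² = (y₁y₂ − C²q)/(C²λ₀) and set Z = [[y₁/(Cλ₀), w], [w, y₂/C]]. Then ‖Z‖ ≤ 1; moreover ‖Z‖ = 1 if and only if (C|y₁ − ȳ₂q| + |y₁y₂ − C²q|)/(C² − |y₂|²) = |λ₀|. -/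
open Matrix

section Aux

open Complex

private lemma normSq_cross_id (a b w : ℂ) :
    Complex.normSq ((starRingEnd ℂ) a * w + (starRingEnd ℂ) w * b) + Complex.normSq (a*b - w^2)
      = (Complex.normSq a + Complex.normSq w) * (Complex.normSq b + Complex.normSq w) := by
  simp [Complex.normSq_apply, Complex.mul_re, Complex.mul_im, pow_two]
  ring

private lemma normSq_AB_id (t : ℝ) (y₁ y₂ q : ℂ) :
    Complex.normSq (y₁*y₂ - (t:ℂ)*q) - t * Complex.normSq (y₁ - (starRingEnd ℂ) y₂ * q)
      = (t - Complex.normSq y₂) * (t * Complex.normSq q - Complex.normSq y₁) := by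
  simp [Complex.normSq_apply, Complex.mul_re, Complex.mul_im]
  ring

private lemma euclid_norm_sq (x : EuclideanSpace ℂ (Fin 2)) :
    ‖x‖^2 = normSq (x 0) + normSq (x 1) := by
  rw [EuclideanSpace.norm_eq, Real.sq_sqrt (by positivity)]
  simp [Fin.sum_univ_two, Complex.sq_norm]

private lemma clm_apply₀ (a w b : ℂ) (x : EuclideanSpace ℂ (Fin 2)) :
    (Matrix.toEuclideanCLM (𝕜 := ℂ) !![a, w; w, b] x) 0 = a * x 0 + w * x 1 := by
  have h := Matrix.ofLp_toEuclideanCLM (𝕜 := ℂ) !![a, w; w, b] x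
  have := congrFun h 0
  simpa [Matrix.mulVec, dotProduct, Fin.sum_univ_two] using this

private lemma clm_apply₁ (a w b : ℂ) (x : EuclideanSpace ℂ (Fin 2)) :
    (Matrix.toEuclideanCLM (𝕜 := ℂ) !![a, w; w, b] x) 1 = w * x 0 + b * x 1 := by
  have h := Matrix.ofLp_toEuclideanCLM (𝕜 := ℂ) !![a, w; w, b] x
  have := congrFun h 1
  simpa [Matrix.mulVec, dotProduct, Fin.sum_univ_two] using this

private lemma qform (a b w x₁ x₂ : ℂ) (k : ℝ)
    (h1 : normSq a + normSq w ≤ k) (h2 : normSq b + normSq w ≤ k)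
    (h3 : normSq ((starRingEnd ℂ) a * w + (starRingEnd ℂ) w * b)
        ≤ (k - (normSq a + normSq w)) * (k - (normSq b + normSq w))) :
    normSq (a*x₁ + w*x₂) + normSq (w*x₁ + b*x₂) ≤ k * (normSq x₁ + normSq x₂) := by
  set c := (starRingEnd ℂ) a * w + (starRingEnd ℂ) w * b with hc
  have e1 : normSq (a*x₁ + w*x₂) = normSq a * normSq x₁ + normSq w * normSq x₂
      + 2 * ((a*x₁) * (starRingEnd ℂ) (w*x₂)).re := by
    rw [Complex.normSq_add]; simp [Complex.normSq_mul]
  have e2 : normSq (w*x₁ + b*x₂) = normSq w * normSq x₁ + normSq b * normSq x₂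
      + 2 * ((w*x₁) * (starRingEnd ℂ) (b*x₂)).re := by
    rw [Complex.normSq_add]; simp [Complex.normSq_mul]
  have ecross : ((a*x₁) * (starRingEnd ℂ) (w*x₂)).re + ((w*x₁) * (starRingEnd ℂ) (b*x₂)).re
      = ((starRingEnd ℂ) c * (x₁ * (starRingEnd ℂ) x₂)).re := by
    rw [← Complex.add_re]; congr 1; rw [hc]; push_cast [_root_.map_add, _root_.map_mul]; ring_nf
    simp [Complex.conj_conj]; ring
  have hbound : ((starRingEnd ℂ) c * (x₁ * (starRingEnd ℂ) x₂)).re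
      ≤ ‖c‖ * (‖x₁‖ * ‖x₂‖) := by
    calc ((starRingEnd ℂ) c * (x₁ * (starRingEnd ℂ) x₂)).re
        ≤ ‖(starRingEnd ℂ) c * (x₁ * (starRingEnd ℂ) x₂)‖ := Complex.re_le_norm _
      _ = ‖c‖ * (‖x₁‖ * ‖x₂‖) := by
          simp [norm_mul, Complex.norm_conj]
  have hsq : ∀ z : ℂ, normSq z = (‖z‖)^2 := fun z => (Complex.sq_norm z).symm
  rw [e1, e2]
  set u := ‖x₁‖; set v := ‖x₂‖; set γ := ‖c‖
  have hu : (0:ℝ) ≤ u := norm_nonneg _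
  have hv : (0:ℝ) ≤ v := norm_nonneg _
  have hγ : (0:ℝ) ≤ γ := norm_nonneg _
  rw [hsq x₁, hsq x₂] at *
  rw [hsq c] at h3
  set m1 := k - (normSq a + normSq w) with hm1
  set m2 := k - (normSq b + normSq w) with hm2
  have h1' : (0:ℝ) ≤ m1 := by linarith
  have h2' : (0:ℝ) ≤ m2 := by linarith
  have key : 2 * (γ * (u * v)) ≤ m1 * u^2 + m2 * v^2 := by
    nlinarith [sq_nonneg (m1*u^2 - m2*v^2), sq_nonneg (m1*u^2 + m2*v^2 - 2*γ*u*v),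
      mul_nonneg (mul_nonneg hγ hu) hv, sq_nonneg (u*v),
      mul_nonneg (mul_nonneg h1' hu) hu, mul_nonneg (mul_nonneg h2' hv) hv]
  nlinarith [hbound, key]

private lemma opnorm_le_sqrt (a w b : ℂ) (k : ℝ) (hk : 0 ≤ k)
    (h : ∀ x₁ x₂ : ℂ, normSq (a*x₁ + w*x₂) + normSq (w*x₁ + b*x₂)
        ≤ k * (normSq x₁ + normSq x₂)) :
    ‖Matrix.toEuclideanCLM (𝕜 := ℂ) !![a, w; w, b]‖ ≤ Real.sqrt k := by
  apply ContinuousLinearMap.opNorm_le_bound _ (Real.sqrt_nonneg k)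
  intro x
  set T := Matrix.toEuclideanCLM (𝕜 := ℂ) !![a, w; w, b]
  have h2 : ‖T x‖^2 ≤ k * ‖x‖^2 := by
    rw [euclid_norm_sq, euclid_norm_sq, clm_apply₀, clm_apply₁]
    exact h (x 0) (x 1)
  have := Real.sqrt_le_sqrt h2
  rwa [Real.sqrt_sq (norm_nonneg _), Real.sqrt_mul hk, Real.sqrt_sq (norm_nonneg _)] at this

private lemma one_le_opnorm_of_witness (a w b x₁ x₂ : ℂ) (hx : ¬(x₁ = 0 ∧ x₂ = 0))
    (heq : normSq (a*x₁ + w*x₂) + normSq (w*x₁ + b*x₂) = normSq x₁ + normSq x₂) :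
    1 ≤ ‖Matrix.toEuclideanCLM (𝕜 := ℂ) !![a, w; w, b]‖ := by
  set T := Matrix.toEuclideanCLM (𝕜 := ℂ) !![a, w; w, b]
  set x : EuclideanSpace ℂ (Fin 2) := (WithLp.equiv 2 (Fin 2 → ℂ)).symm ![x₁, x₂] with hxdef
  have hx0 : x 0 = x₁ := rfl
  have hx1 : x 1 = x₂ := rfl
  have hxne : x ≠ 0 := by
    intro h
    apply hx
    constructor
    · rw [← hx0, h]; rfl
    · rw [← hx1, h]; rfl
  have hnx : 0 < ‖x‖ := norm_pos_iff.mpr hxne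
  have hTx : ‖T x‖ = ‖x‖ := by
    have h2 : ‖T x‖^2 = ‖x‖^2 := by
      rw [euclid_norm_sq, euclid_norm_sq, clm_apply₀, clm_apply₁, hx0, hx1]
      exact heq
    have := congrArg Real.sqrt h2
    rwa [Real.sqrt_sq (norm_nonneg _), Real.sqrt_sq (norm_nonneg _)] at this
  have hb := T.le_opNorm x
  rw [hTx] at hb
  exact le_of_mul_le_mul_right (by linarith) hnx

private lemma exists_witness (a b w : ℂ)
    (hp : normSq a + normSq w ≤ 1)
    (hdet : normSq ((starRingEnd ℂ) a * w + (starRingEnd ℂ) w * b)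
        = (1 - (normSq a + normSq w)) * (1 - (normSq b + normSq w))) :
    ∃ x₁ x₂ : ℂ, ¬(x₁ = 0 ∧ x₂ = 0) ∧
      normSq (a*x₁ + w*x₂) + normSq (w*x₁ + b*x₂) = normSq x₁ + normSq x₂ := by
  set c := (starRingEnd ℂ) a * w + (starRingEnd ℂ) w * b with hc
  set p := normSq a + normSq w with hpdef
  set s := normSq b + normSq w with hsdef
  by_cases hm : p = 1
  · refine ⟨1, 0, by simp, ?_⟩
    simp only [mul_one, mul_zero, add_zero]
    rw [Complex.normSq_one, Complex.normSq_zero]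
    linarith [hm]
  · have hm1 : 0 < 1 - p := lt_of_le_of_ne (by linarith) (by intro h; apply hm; linarith)
    refine ⟨c, ((1 - p : ℝ) : ℂ), ?_, ?_⟩
    · rintro ⟨-, h2⟩
      exact (Complex.ofReal_ne_zero.mpr hm1.ne') h2
    · have e1 : normSq (a*c + w*((1-p:ℝ):ℂ)) = normSq a * normSq c + normSq w * (1-p)^2
          + 2 * ((a*c) * (starRingEnd ℂ) (w*((1-p:ℝ):ℂ))).re := by
        rw [Complex.normSq_add, Complex.normSq_mul, Complex.normSq_mul,
          Complex.normSq_ofReal]; ring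
      have e2 : normSq (w*c + b*((1-p:ℝ):ℂ)) = normSq w * normSq c + normSq b * (1-p)^2
          + 2 * ((w*c) * (starRingEnd ℂ) (b*((1-p:ℝ):ℂ))).re := by
        rw [Complex.normSq_add, Complex.normSq_mul, Complex.normSq_mul,
          Complex.normSq_ofReal]; ring
      have ecross : ((a*c) * (starRingEnd ℂ) (w*((1-p:ℝ):ℂ))).re
          + ((w*c) * (starRingEnd ℂ) (b*((1-p:ℝ):ℂ))).re
          = (1-p) * normSq c := by
        have : (a*c) * (starRingEnd ℂ) (w*((1-p:ℝ):ℂ))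
            + (w*c) * (starRingEnd ℂ) (b*((1-p:ℝ):ℂ))
            = ((1-p:ℝ):ℂ) * ((starRingEnd ℂ) c * c) := by
          rw [hc]; push_cast [_root_.map_mul, _root_.map_add]
          simp [Complex.conj_conj, Complex.conj_ofReal]
          ring
        have h2 : (starRingEnd ℂ) c * c = ((normSq c : ℝ) : ℂ) := by
          rw [mul_comm, Complex.mul_conj]
        rw [← Complex.add_re, this, h2, ← Complex.ofReal_mul, Complex.ofReal_re]
      rw [e1, e2]
      have hns : normSq ((1-p:ℝ):ℂ) = (1-p)^2 := by
        rw [Complex.normSq_ofReal]; ring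
      rw [hns]
      have hdc : normSq c = (1 - p) * (1 - s) := hdet
      linear_combination 2*ecross + (1-p)*hdc - normSq c * hpdef - (1-p)^2 * hsdef

private lemma contraction_of (a b w : ℂ)
    (hp1 : normSq a + normSq w ≤ 1) (hp2 : normSq b + normSq w ≤ 1)
    (hd : normSq a + normSq w + (normSq b + normSq w) ≤ 1 + normSq (a*b - w^2)) :
    ‖Matrix.toEuclideanCLM (𝕜 := ℂ) !![a, w; w, b]‖ ≤ 1 := by
  have h := opnorm_le_sqrt a w b 1 zero_le_one (fun x₁ x₂ => qform a b w x₁ x₂ 1 hp1 hp2 (by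
    nlinarith [normSq_cross_id a b w, Complex.normSq_nonneg (a*b - w^2)]))
  rwa [Real.sqrt_one] at h

private lemma norm_eq_one_of (a b w : ℂ)
    (hp1 : normSq a + normSq w ≤ 1) (hp2 : normSq b + normSq w ≤ 1)
    (hd : normSq a + normSq w + (normSq b + normSq w) = 1 + normSq (a*b - w^2)) :
    ‖Matrix.toEuclideanCLM (𝕜 := ℂ) !![a, w; w, b]‖ = 1 := by
  refine le_antisymm (contraction_of a b w hp1 hp2 hd.le) ?_
  obtain ⟨x₁, x₂, hx, heq⟩ := exists_witness a b w hp1 (by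
    nlinarith [normSq_cross_id a b w])
  exact one_le_opnorm_of_witness a w b x₁ x₂ hx heq

private lemma norm_lt_one_of (a b w : ℂ)
    (hp1 : normSq a + normSq w < 1) (hp2 : normSq b + normSq w < 1)
    (hd : normSq a + normSq w + (normSq b + normSq w) < 1 + normSq (a*b - w^2)) :
    ‖Matrix.toEuclideanCLM (𝕜 := ℂ) !![a, w; w, b]‖ < 1 := by
  set p := normSq a + normSq w with hpdef
  set s := normSq b + normSq w with hsdef
  have hp0 : 0 ≤ p := add_nonneg (normSq_nonneg _) (normSq_nonneg _)
  have hs0 : 0 ≤ s := add_nonneg (normSq_nonneg _) (normSq_nonneg _)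
  set m1 := 1 - p with hm1
  set m2 := 1 - s with hm2
  have hm1p : 0 < m1 := by simp only [hm1]; linarith
  have hm2p : 0 < m2 := by simp only [hm2]; linarith
  set δ := 1 + normSq (a*b - w^2) - p - s with hδ
  have hδp : 0 < δ := by simp only [hδ]; linarith
  set ε := min (min m1 m2) (δ/(m1+m2)) with hε
  have hεp : 0 < ε := lt_min (lt_min hm1p hm2p) (div_pos hδp (by linarith))
  have hε1 : ε ≤ m1 := le_trans (min_le_left _ _) (min_le_left _ _)
  have hε2 : ε ≤ m2 := le_trans (min_le_left _ _) (min_le_right _ _)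
  have hε3 : ε * (m1 + m2) ≤ δ := by
    have := min_le_right (min m1 m2) (δ/(m1+m2))
    calc ε * (m1 + m2) ≤ (δ/(m1+m2)) * (m1+m2) := by
          apply mul_le_mul_of_nonneg_right this (by linarith)
      _ = δ := div_mul_cancel₀ _ (by positivity)
  set k := 1 - ε with hk
  have hk0 : 0 ≤ k := by simp only [hk]; linarith
  have hk1 : k < 1 := by simp only [hk]; linarith
  have hcross : normSq ((starRingEnd ℂ) a * w + (starRingEnd ℂ) w * b)
      = p * s - normSq (a*b - w^2) := by
    have := normSq_cross_id a b w
    rw [← hpdef, ← hsdef] at this; linarith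
  have hdet : normSq ((starRingEnd ℂ) a * w + (starRingEnd ℂ) w * b)
      ≤ (k - p) * (k - s) := by
    rw [hcross]
    have h4 : (k - p) * (k - s) = (1 - p - ε) * (1 - s - ε) := by rw [hk]; ring
    rw [h4]
    have hε3' : ε * ((1-p) + (1-s)) ≤ 1 + normSq (a*b - w^2) - p - s := by
      rw [← hm1, ← hm2, ← hδ]; exact hε3
    nlinarith [sq_nonneg ε, hε3']
  have h := opnorm_le_sqrt a w b k hk0
    (fun x₁ x₂ => qform a b w x₁ x₂ k (by linarith) (by linarith) hdet)
  calc ‖Matrix.toEuclideanCLM (𝕜 := ℂ) !![a, w; w, b]‖ ≤ Real.sqrt k := h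
    _ < 1 := by
        rw [show (1:ℝ) = Real.sqrt 1 by rw [Real.sqrt_one]]
        exact Real.sqrt_lt_sqrt hk0 hk1

private lemma fact_m11 (r C A B D n1 n2 : ℝ) (hr0 : 0 < r) (hr1 : r < 1) (hC : 0 < C)
    (hn2 : 0 ≤ n2) (hn2C : n2 < C) (hle : n2 ≤ n1) (hA : 0 ≤ A) (hB : 0 ≤ B)
    (hDdef : D = C^2 - n2^2) (hDy : D*n1 ≤ C*A + n2*B) (hAB : A + B ≤ D*r) :
    n1^2 + B*r ≤ C^2*r^2 := by
  have hD : 0 < D := by nlinarith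
  have h1 : n1 ≤ C*r := by
    have h1a : D*n1 ≤ D*(C*r) := by nlinarith
    exact le_of_mul_le_mul_left h1a hD
  have hAq : (C+n2)*(n1 - n2*r) ≤ A := by
    have h2 : D*n1 ≤ (C-n2)*A + n2*(D*r) := by nlinarith
    nlinarith
  have h3 : B*r ≤ (D*r - A)*r := by nlinarith
  have h4 : n2*r ≤ n1 := by nlinarith
  have h5 : 0 ≤ (C*r - n1)*(n1 - n2*r) := mul_nonneg (by linarith) (by linarith)
  nlinarith [mul_le_mul_of_nonneg_right hAq hr0.le]

private lemma fact_m11_strict (r C A B D n1 n2 : ℝ) (hr0 : 0 < r) (hr1 : r < 1) (hC : 0 < C)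
    (hn2 : 0 ≤ n2) (hn2C : n2 < C) (hle : n2 ≤ n1) (hA : 0 ≤ A) (hB : 0 ≤ B)
    (hDdef : D = C^2 - n2^2) (hDy : D*n1 ≤ C*A + n2*B) (hAB : A + B < D*r) :
    n1^2 + B*r < C^2*r^2 := by
  have hD : 0 < D := by nlinarith
  have h1 : n1 ≤ C*r := by
    have h1a : D*n1 ≤ D*(C*r) := by nlinarith
    exact le_of_mul_le_mul_left h1a hD
  have hAq : (C+n2)*(n1 - n2*r) ≤ A := by
    have h2 : D*n1 ≤ (C-n2)*A + n2*(D*r) := by nlinarith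
    nlinarith
  have h3 : B*r < (D*r - A)*r := by nlinarith
  have h4 : n2*r ≤ n1 := by nlinarith
  have h5 : 0 ≤ (C*r - n1)*(n1 - n2*r) := mul_nonneg (by linarith) (by linarith)
  nlinarith [mul_le_mul_of_nonneg_right hAq hr0.le]

private lemma fact_E (r C A B D n1 n2 Q : ℝ) (hD : 0 < D)
    (hA : 0 ≤ A) (hDdef : D = C^2 - n2^2)
    (hABid : B^2 - A^2 = D * (C^2*Q^2 - n1^2)) (hAB : A + B ≤ D*r) :
    n1^2 + n2^2*r^2 + 2*B*r ≤ C^2*r^2 + C^2*Q^2 := by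
  have f1 : 0 ≤ D*r - B - A := by linarith
  have f2 : 0 ≤ D*r - B + A := by linarith
  have hid : D * (C^2*r^2 + C^2*Q^2 - n1^2 - n2^2*r^2 - 2*B*r)
      = (D*r - B - A) * (D*r - B + A) := by
    linear_combination (-(D*r^2))*hDdef + (-1)*hABid
  have key : 0 ≤ D * (C^2*r^2 + C^2*Q^2 - n1^2 - n2^2*r^2 - 2*B*r) := by
    rw [hid]; exact mul_nonneg f1 f2
  nlinarith

private lemma fact_E_strict (r C A B D n1 n2 Q : ℝ) (hD : 0 < D)
    (hA : 0 ≤ A) (hDdef : D = C^2 - n2^2)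
    (hABid : B^2 - A^2 = D * (C^2*Q^2 - n1^2)) (hAB : A + B < D*r) :
    n1^2 + n2^2*r^2 + 2*B*r < C^2*r^2 + C^2*Q^2 := by
  have f1 : 0 < D*r - B - A := by linarith
  have f2 : 0 < D*r - B + A := by linarith
  have hid : D * (C^2*r^2 + C^2*Q^2 - n1^2 - n2^2*r^2 - 2*B*r)
      = (D*r - B - A) * (D*r - B + A) := by
    linear_combination (-(D*r^2))*hDdef + (-1)*hABid
  have key : 0 < D * (C^2*r^2 + C^2*Q^2 - n1^2 - n2^2*r^2 - 2*B*r) := by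
    rw [hid]; exact mul_pos f1 f2
  nlinarith

private lemma fact_E_eq (r C A B D n1 n2 Q : ℝ) (hD : 0 < D)
    (hDdef : D = C^2 - n2^2)
    (hABid : B^2 - A^2 = D * (C^2*Q^2 - n1^2)) (hAB : A + B = D*r) :
    n1^2 + n2^2*r^2 + 2*B*r = C^2*r^2 + C^2*Q^2 := by
  have key : D * (C^2*r^2 + C^2*Q^2 - n1^2 - n2^2*r^2 - 2*B*r) = 0 := by
    have hid : D * (C^2*r^2 + C^2*Q^2 - n1^2 - n2^2*r^2 - 2*B*r)
        = (D*r - B - A) * (D*r - B + A) := by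
      linear_combination (-(D*r^2))*hDdef + (-1)*hABid
    rw [hid, show D*r - B - A = 0 by linarith, zero_mul]
  rcases mul_eq_zero.mp key with h | h
  · exact absurd h hD.ne'
  · linarith

private lemma div3_le (c X Y Z : ℝ) (hc : 0 < c) (h : X + Y ≤ c + Z) :
    X/c + Y/c ≤ 1 + Z/c := by
  rw [← add_div, show (1:ℝ) + Z/c = (c+Z)/c by field_simp]
  exact (div_le_div_iff_of_pos_right hc).mpr h

private lemma div3_lt (c X Y Z : ℝ) (hc : 0 < c) (h : X + Y < c + Z) :
    X/c + Y/c < 1 + Z/c := by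
  rw [← add_div, show (1:ℝ) + Z/c = (c+Z)/c by field_simp]
  exact (div_lt_div_iff_of_pos_right hc).mpr h

private lemma div3_eq (c X Y Z : ℝ) (hc : 0 < c) (h : X + Y = c + Z) :
    X/c + Y/c = 1 + Z/c := by
  rw [← add_div, show (1:ℝ) + Z/c = (c+Z)/c by field_simp, h]

end Aux

private lemma aux_Dpos (C n2 : ℝ) (h1 : 0 ≤ n2) (h2 : n2 < C) : 0 < C^2 - n2^2 := by
  nlinarith

private lemma aux_m22 (r C B D n2 : ℝ) (hr0 : 0 < r) (hDdef : D = C^2 - n2^2)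
    (hBle : B ≤ D*r) : n2^2*r^2 + B*r ≤ C^2*r^2 := by
  nlinarith [mul_le_mul_of_nonneg_right hBle hr0.le]

private lemma aux_m22_strict (r C B D n2 : ℝ) (hr0 : 0 < r) (hDdef : D = C^2 - n2^2)
    (hBls : B < D*r) : n2^2*r^2 + B*r < C^2*r^2 := by
  nlinarith [mul_lt_mul_of_pos_right hBls hr0]

set_option maxHeartbeats 1000000 in
/-- The matrix `Z = [[y₁/(Clam₀), w], [w, y₂/C]]` is a contraction, with norm exactly `1`
iff `‖Φ‖ = |lam₀|`. -/
theorem Z_matrix_contraction (lam₀ : ℂ) (hlam : ‖lam₀‖ < 1) (hlamne : lam₀ ≠ 0)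
    (C : ℝ) (hC : 0 < C) (y₁ y₂ q w : ℂ)
    (hne : y₁ * y₂ ≠ (C : ℂ)^2 * q)
    (hle : ‖y₂‖ ≤ ‖y₁‖)
    (hy₂ : ‖y₂‖ < C)
    (hΦ : (C * ‖y₁ - (starRingEnd ℂ) y₂ * q‖
        + ‖y₁ * y₂ - (C : ℂ)^2 * q‖) / (C^2 - (‖y₂‖)^2)
        ≤ ‖lam₀‖)
    (hw : w^2 = (y₁ * y₂ - (C : ℂ)^2 * q) / ((C : ℂ)^2 * lam₀)) :
    ‖Matrix.toEuclideanCLM (𝕜 := ℂ)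
        !![y₁ / ((C : ℂ) * lam₀), w; w, y₂ / (C : ℂ)]‖ ≤ 1 ∧
    (‖Matrix.toEuclideanCLM (𝕜 := ℂ)
        !![y₁ / ((C : ℂ) * lam₀), w; w, y₂ / (C : ℂ)]‖ = 1 ↔
      (C * ‖y₁ - (starRingEnd ℂ) y₂ * q‖
        + ‖y₁ * y₂ - (C : ℂ)^2 * q‖) / (C^2 - (‖y₂‖)^2)
        = ‖lam₀‖) := by
  have hr0 : 0 < ‖lam₀‖ := norm_pos_iff.mpr hlamne
  have hCne : (C:ℂ) ≠ 0 := Complex.ofReal_ne_zero.mpr hC.ne'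
  -- normSq values (raw)
  have hSa : Complex.normSq (y₁ / ((C:ℂ) * lam₀))
      = (‖y₁‖)^2 / (C^2 * (‖lam₀‖)^2) := by
    rw [← Complex.sq_norm, norm_div, norm_mul, Complex.norm_real, Real.norm_eq_abs,
      abs_of_pos hC, div_pow, mul_pow]
  have hSb : Complex.normSq (y₂ / (C:ℂ)) = (‖y₂‖)^2 / C^2 := by
    rw [← Complex.sq_norm, norm_div, Complex.norm_real, Real.norm_eq_abs, abs_of_pos hC, div_pow]
  have hSw : Complex.normSq w
      = ‖y₁ * y₂ - (C:ℂ)^2 * q‖ / (C^2 * ‖lam₀‖) := by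
    rw [← Complex.sq_norm, ← norm_pow, hw, norm_div, norm_mul, norm_pow,
      Complex.norm_real, Real.norm_eq_abs, abs_of_pos hC]
  have habw : y₁ / ((C:ℂ) * lam₀) * (y₂ / (C:ℂ)) - w^2 = q / lam₀ := by
    rw [hw]; field_simp; ring
  have hSd : Complex.normSq (y₁ / ((C:ℂ) * lam₀) * (y₂ / (C:ℂ)) - w^2)
      = (‖q‖)^2 / (‖lam₀‖)^2 := by
    rw [habw, ← Complex.sq_norm, norm_div, div_pow]
  -- the key inequality D·|y₁| ≤ C·A + |y₂|·B
  have hDy : (C^2 - (‖y₂‖)^2) * ‖y₁‖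
      ≤ C * (C * ‖y₁ - (starRingEnd ℂ) y₂ * q‖)
        + ‖y₂‖ * ‖y₁ * y₂ - (C:ℂ)^2 * q‖ := by
    by_cases hy2 : y₂ = 0
    · subst hy2
      simp only [map_zero, norm_zero, zero_mul, sub_zero, mul_zero, zero_add, ne_eq,
        OfNat.ofNat_ne_zero, not_false_eq_true, zero_pow]
      exact le_of_eq (by ring)
    · have hx2 : (((‖y₂‖)^2 : ℝ) : ℂ) = y₂ * (starRingEnd ℂ) y₂ := by
        rw [Complex.mul_conj, Complex.sq_norm]
      have hkey : ((C:ℂ)^2 - (((‖y₂‖)^2 : ℝ) : ℂ)) * (y₁ * y₂)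
          = (C:ℂ) * y₂ * ((C:ℂ) * (y₁ - (starRingEnd ℂ) y₂ * q))
            - (((‖y₂‖)^2 : ℝ) : ℂ) * (y₁ * y₂ - (C:ℂ)^2 * q) := by
        rw [hx2]; ring
      have habs := congrArg (norm : ℂ → ℝ) hkey
      rw [norm_mul] at habs
      have hL : ‖(C:ℂ)^2 - (((‖y₂‖)^2 : ℝ):ℂ)‖
          = C^2 - (‖y₂‖)^2 := by
        rw [show (C:ℂ)^2 - (((‖y₂‖)^2 : ℝ):ℂ)
            = (((C^2 - (‖y₂‖)^2 : ℝ)):ℂ) by push_cast; ring,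
          Complex.norm_real, Real.norm_eq_abs,
          abs_of_nonneg (aux_Dpos C _ (norm_nonneg y₂) hy₂).le]
      have htri : ‖(C:ℂ) * y₂ * ((C:ℂ) * (y₁ - (starRingEnd ℂ) y₂ * q))
            - (((‖y₂‖)^2 : ℝ):ℂ) * (y₁ * y₂ - (C:ℂ)^2 * q)‖
          ≤ C * ‖y₂‖ * (C * ‖y₁ - (starRingEnd ℂ) y₂ * q‖)
            + (‖y₂‖)^2 * ‖y₁ * y₂ - (C:ℂ)^2 * q‖ := by
        have tri := norm_add_le ((C:ℂ) * y₂ * ((C:ℂ) * (y₁ - (starRingEnd ℂ) y₂ * q)))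
          (-((((‖y₂‖)^2 : ℝ):ℂ) * (y₁ * y₂ - (C:ℂ)^2 * q)))
        rw [← sub_eq_add_neg, norm_neg] at tri
        refine le_trans tri ?_
        rw [norm_mul, norm_mul, norm_mul, norm_mul,
          Complex.norm_real, Complex.norm_real, Real.norm_eq_abs, Real.norm_eq_abs, abs_of_pos hC,
          abs_of_nonneg (sq_nonneg (‖y₂‖))]
      rw [hL] at habs
      have hmul : ‖y₁*y₂‖ = ‖y₁‖ * ‖y₂‖ :=
        norm_mul _ _
      have hcomb : (C^2 - (‖y₂‖)^2) * (‖y₁‖ * ‖y₂‖)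
          ≤ C * ‖y₂‖ * (C * ‖y₁ - (starRingEnd ℂ) y₂ * q‖)
            + (‖y₂‖)^2 * ‖y₁ * y₂ - (C:ℂ)^2 * q‖ := by
        rw [← hmul, habs]; exact htri
      have h2pos : 0 < ‖y₂‖ := norm_pos_iff.mpr hy2
      apply le_of_mul_le_mul_right _ h2pos
      calc (C^2 - (‖y₂‖)^2) * ‖y₁‖ * ‖y₂‖
          = (C^2 - (‖y₂‖)^2) * (‖y₁‖ * ‖y₂‖) := by ring
        _ ≤ C * ‖y₂‖ * (C * ‖y₁ - (starRingEnd ℂ) y₂ * q‖)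
            + (‖y₂‖)^2 * ‖y₁ * y₂ - (C:ℂ)^2 * q‖ := hcomb
        _ = (C * (C * ‖y₁ - (starRingEnd ℂ) y₂ * q‖)
            + ‖y₂‖ * ‖y₁ * y₂ - (C:ℂ)^2 * q‖) * ‖y₂‖ := by
            ring
  -- the B²−A² identity
  have hABid_raw := normSq_AB_id (C^2) y₁ y₂ q
  rw [Complex.ofReal_pow] at hABid_raw
  rw [← Complex.sq_norm (y₁*y₂ - (C:ℂ)^2*q), ← Complex.sq_norm y₂, ← Complex.sq_norm q,
    ← Complex.sq_norm y₁, ← Complex.sq_norm (y₁ - (starRingEnd ℂ) y₂ * q)] at hABid_raw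
  -- abbreviations
  set r := ‖lam₀‖ with hrdef
  set n1 := ‖y₁‖ with hn1def
  set n2 := ‖y₂‖ with hn2def
  set Q := ‖q‖ with hQdef
  set A := C * ‖y₁ - (starRingEnd ℂ) y₂ * q‖ with hAdef
  set B := ‖y₁ * y₂ - (C:ℂ)^2 * q‖ with hBdef
  set D := C^2 - n2^2 with hDdef
  have hn2 : 0 ≤ n2 := norm_nonneg y₂
  have hD : 0 < D := hDdef ▸ aux_Dpos C n2 hn2 hy₂
  have hA : 0 ≤ A := mul_nonneg hC.le (norm_nonneg _)
  have hB : 0 < B := norm_pos_iff.mpr (sub_ne_zero.mpr hne)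
  have hAB : A + B ≤ D * r := by
    rw [div_le_iff₀ hD] at hΦ; linarith
  have hABid : B^2 - A^2 = D * (C^2*Q^2 - n1^2) := by
    rw [hAdef, hDdef]; linear_combination hABid_raw
  -- main real inequalities
  have hm11 : n1^2 + B*r ≤ C^2*r^2 :=
    fact_m11 r C A B D n1 n2 hr0 hlam hC hn2 hy₂ hle hA hB.le hDdef hDy hAB
  have hBle : B ≤ D*r := by linarith
  have hm22 : n2^2*r^2 + B*r ≤ C^2*r^2 := aux_m22 r C B D n2 hr0 hDdef hBle
  have hE : n1^2 + n2^2*r^2 + 2*B*r ≤ C^2*r^2 + C^2*Q^2 :=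
    fact_E r C A B D n1 n2 Q hD hA hDdef hABid hAB
  -- fraction versions
  have hcr2 : (0:ℝ) < C^2*r^2 := by positivity
  have hSw2 : Complex.normSq w = (B*r)/(C^2*r^2) := by
    rw [hSw]; field_simp
  have hSb2 : Complex.normSq (y₂ / (C:ℂ)) = (n2^2*r^2)/(C^2*r^2) := by
    rw [hSb]; field_simp
  have hSd2 : Complex.normSq (y₁ / ((C:ℂ) * lam₀) * (y₂ / (C:ℂ)) - w^2)
      = (C^2*Q^2)/(C^2*r^2) := by
    rw [hSd]; field_simp
  have hp1 : Complex.normSq (y₁ / ((C:ℂ) * lam₀)) + Complex.normSq w ≤ 1 := by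
    rw [hSa, hSw2, ← add_div, div_le_one hcr2]; exact hm11
  have hp2 : Complex.normSq (y₂ / (C:ℂ)) + Complex.normSq w ≤ 1 := by
    rw [hSb2, hSw2, ← add_div, div_le_one hcr2]; exact hm22
  have hd : Complex.normSq (y₁ / ((C:ℂ) * lam₀)) + Complex.normSq w
      + (Complex.normSq (y₂ / (C:ℂ)) + Complex.normSq w)
      ≤ 1 + Complex.normSq (y₁ / ((C:ℂ) * lam₀) * (y₂ / (C:ℂ)) - w^2) := by
    rw [hSa, hSw2, hSb2, hSd2, ← add_div, ← add_div]
    exact div3_le _ _ _ _ hcr2 (by linarith)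
  refine ⟨contraction_of _ _ _ hp1 hp2 hd, ?_, ?_⟩
  · intro hnorm
    by_contra hne2
    have hlt : (A+B)/D < r := lt_of_le_of_ne hΦ hne2
    have hABs : A + B < D*r := by rw [div_lt_iff₀ hD] at hlt; linarith
    have hm11s : n1^2 + B*r < C^2*r^2 :=
      fact_m11_strict r C A B D n1 n2 hr0 hlam hC hn2 hy₂ hle hA hB.le hDdef hDy hABs
    have hBls : B < D*r := by linarith
    have hm22s : n2^2*r^2 + B*r < C^2*r^2 := aux_m22_strict r C B D n2 hr0 hDdef hBls
    have hEs : n1^2 + n2^2*r^2 + 2*B*r < C^2*r^2 + C^2*Q^2 :=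
      fact_E_strict r C A B D n1 n2 Q hD hA hDdef hABid hABs
    have hlt1 : ‖Matrix.toEuclideanCLM (𝕜 := ℂ)
        !![y₁ / ((C:ℂ) * lam₀), w; w, y₂ / (C:ℂ)]‖ < 1 := by
      apply norm_lt_one_of
      · rw [hSa, hSw2, ← add_div, div_lt_one hcr2]; exact hm11s
      · rw [hSb2, hSw2, ← add_div, div_lt_one hcr2]; exact hm22s
      · rw [hSa, hSw2, hSb2, hSd2, ← add_div, ← add_div]
        exact div3_lt _ _ _ _ hcr2 (by linarith)
    exact absurd hnorm (ne_of_lt hlt1)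
  · intro heq
    have hABeq : A + B = D*r := by
      rw [div_eq_iff hD.ne'] at heq; linarith
    have hEeq : n1^2 + n2^2*r^2 + 2*B*r = C^2*r^2 + C^2*Q^2 :=
      fact_E_eq r C A B D n1 n2 Q hD hDdef hABid hABeq
    apply norm_eq_one_of _ _ _ hp1 hp2
    rw [hSa, hSw2, hSb2, hSd2, ← add_div, ← add_div]
    exact div3_eq _ _ _ _ hcr2 (by linarith)
end

section
/- Schwarz lemma for Gₙ via the Costara function: let λ₀ ∈ 𝔻 \ {0} and (s₁⁰,…,s_{n−1}⁰,p⁰) ∈ Gₙ. If there is an analytic function ψ : 𝔻 → Gₙ with ψ(0) = (0,…,0) and ψ(λ₀) = (s₁⁰,…,s_{n−1}⁰,p⁰), then sup over z in the closed unit disc of |(n(−1)ⁿp⁰z^{n−1} + (n−1)(−1)^{n−1}s_{n−1}⁰z^{n−2} + ⋯ − s₁⁰)/(n − (n−1)s₁⁰z + ⋯ + (−1)^{n−1}s_{n−1}⁰z^{n−1})| ≤ |λ₀|. -/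
/-- The `k`-th elementary symmetric polynomial of `z : Fin n → ℂ`. -/
noncomputable def esymmFin (n : ℕ) (z : Fin n → ℂ) (k : ℕ) : ℂ :=
  ∑ t ∈ Finset.powersetCard k (Finset.univ : Finset (Fin n)), ∏ i ∈ t, z i

/-- Membership in `G_{n,r} = πₙ(𝔻_r × ⋯ × 𝔻_r)`. -/
def inSymmPolydisc (n : ℕ) (r : ℝ) (s : Fin n → ℂ) : Prop :=
  ∃ z : Fin n → ℂ, (∀ i, ‖z i‖ < r) ∧
    ∀ k : Fin n, s k = esymmFin n z (k.val + 1)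

section CostaraAux

open Finset Complex

variable {n : ℕ}

/-- master grouping lemma -/
lemma master (w : Fin n → ℂ) (g : ℕ → ℂ) (z : ℂ) :
    ∑ T ∈ (Finset.univ : Finset (Fin n)).powerset, g T.card * ∏ i ∈ T, (-(w i) * z) =
    ∑ j ∈ Finset.range (n+1), g j * ((-z)^j * esymmFin n w j) := by
  rw [Finset.sum_powerset, card_univ, Fintype.card_fin]
  refine Finset.sum_congr rfl fun j hj => ?_
  rw [esymmFin, Finset.mul_sum, Finset.mul_sum]
  refine Finset.sum_congr rfl fun T hT => ?_
  have hcard : T.card = j := (Finset.mem_powersetCard.1 hT).2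
  have : ∏ i ∈ T, (-(w i) * z) = (-z)^j * ∏ i ∈ T, w i := by
    rw [← hcard]
    rw [← Finset.prod_const (-z), ← Finset.prod_mul_distrib]
    exact Finset.prod_congr rfl fun i _ => by ring
  rw [hcard, this]

lemma prodA (w : Fin n → ℂ) (z : ℂ) :
    ∏ i, (1 - w i * z) = ∑ j ∈ Finset.range (n+1), (-z)^j * esymmFin n w j := by
  have h := Finset.prod_add (fun i => -(w i)*z) (fun _ => (1:ℂ)) Finset.univ
  simp only [Finset.prod_const_one, mul_one] at h
  have h2 := master w (fun _ => (1:ℂ)) z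
  simp only [one_mul] at h2
  rw [← h2, ← h]
  exact Finset.prod_congr rfl fun i _ => by ring

lemma sumD (w : Fin n → ℂ) (z : ℂ) :
    ∑ i, ∏ j ∈ (univ : Finset (Fin n)).erase i, (1 - w j * z)
      = ∑ j ∈ Finset.range (n+1), ((n : ℂ) - j) * ((-z)^j * esymmFin n w j) := by
  rw [← master w (fun j => (n : ℂ) - j) z]
  have step1 : ∀ i : Fin n, ∏ j ∈ (univ : Finset (Fin n)).erase i, (1 - w j * z)
      = ∑ T ∈ ((univ : Finset (Fin n)).erase i).powerset, ∏ j ∈ T, (-(w j) * z) := by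
    intro i
    have h := Finset.prod_add (fun j => -(w j)*z) (fun _ => (1:ℂ)) ((univ : Finset (Fin n)).erase i)
    simp only [Finset.prod_const_one, mul_one] at h
    rw [← h]
    exact Finset.prod_congr rfl fun j _ => by ring
  have step2 : ∀ i : Fin n, ((univ : Finset (Fin n)).erase i).powerset
      = (univ : Finset (Fin n)).powerset.filter (fun T => i ∉ T) := by
    intro i
    ext T
    simp [Finset.subset_erase]
  calc ∑ i, ∏ j ∈ (univ : Finset (Fin n)).erase i, (1 - w j * z)
      = ∑ i : Fin n, ∑ T ∈ (univ : Finset (Fin n)).powerset,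
          if i ∉ T then ∏ j ∈ T, (-(w j) * z) else 0 := by
        refine Finset.sum_congr rfl fun i _ => ?_
        rw [step1 i, step2 i, Finset.sum_filter]
    _ = ∑ T ∈ (univ : Finset (Fin n)).powerset, ∑ i : Fin n,
          if i ∉ T then ∏ j ∈ T, (-(w j) * z) else 0 := Finset.sum_comm
    _ = ∑ T ∈ (univ : Finset (Fin n)).powerset, ((n : ℂ) - T.card) * ∏ i ∈ T, (-(w i) * z) := by
        refine Finset.sum_congr rfl fun T hT => ?_
        rw [Finset.sum_ite, Finset.sum_const, Finset.sum_const_zero, add_zero]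
        have : (Finset.univ.filter (fun i => i ∉ T)) = Tᶜ := by ext i; simp
        rw [this, Finset.card_compl, Fintype.card_fin, nsmul_eq_mul]
        have hc : T.card ≤ n := by
          simpa using Finset.card_le_card (Finset.mem_powerset.1 hT)
        push_cast [Nat.cast_sub hc]
        ring

noncomputable def numE (n : ℕ) (s : Fin n → ℂ) (z : ℂ) : ℂ :=
  ∑ k : Fin n, (-1 : ℂ)^(k.val + 1) * ((k.val + 1 : ℕ) : ℂ) * s k * z^(k.val)

noncomputable def denE (n : ℕ) (s : Fin n → ℂ) (z : ℂ) : ℂ :=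
  (n : ℂ) + ∑ k : Fin n, if k.val + 1 ≤ n - 1 then
      (-1 : ℂ)^(k.val + 1) * ((n : ℂ) - ((k.val + 1 : ℕ) : ℂ)) * s k * z^(k.val + 1) else 0

lemma esymm_zero (w : Fin n → ℂ) : esymmFin n w 0 = 1 := by
  simp [esymmFin]

lemma den_grouped (hn : 1 ≤ n) (w : Fin n → ℂ) (s : Fin n → ℂ)
    (hs : ∀ k : Fin n, s k = esymmFin n w (k.val + 1)) (z : ℂ) :
    denE n s z = ∑ j ∈ Finset.range (n+1), ((n : ℂ) - j) * ((-z)^j * esymmFin n w j) := by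
  rw [Finset.sum_range_succ']
  simp only [esymm_zero, Nat.cast_zero, pow_zero, sub_zero, mul_one, one_mul]
  rw [denE, add_comm]
  congr 1
  rw [← Fin.sum_univ_eq_sum_range (fun i => ((n : ℂ) - (i+1 : ℕ)) * ((-z)^(i+1) * esymmFin n w (i+1))) n]
  refine Finset.sum_congr rfl fun k _ => ?_
  by_cases hk : k.val + 1 ≤ n - 1
  · rw [if_pos hk, hs k, neg_pow]
    push_cast
    ring
  · rw [if_neg hk]
    have : k.val + 1 = n := by omega
    rw [this]
    push_cast
    ring

lemma num_grouped (w : Fin n → ℂ) (s : Fin n → ℂ)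
    (hs : ∀ k : Fin n, s k = esymmFin n w (k.val + 1)) (z : ℂ) :
    z * numE n s z = ∑ j ∈ Finset.range (n+1), (j : ℂ) * ((-z)^j * esymmFin n w j) := by
  rw [Finset.sum_range_succ']
  simp only [Nat.cast_zero, zero_mul, add_zero]
  rw [numE, Finset.mul_sum]
  rw [← Fin.sum_univ_eq_sum_range (fun i => ((i+1 : ℕ) : ℂ) * ((-z)^(i+1) * esymmFin n w (i+1))) n]
  refine Finset.sum_congr rfl fun k _ => ?_
  rw [hs k, neg_pow]
  push_cast
  ring

lemma den_factored (hn : 1 ≤ n) (w : Fin n → ℂ) (s : Fin n → ℂ)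
    (hs : ∀ k : Fin n, s k = esymmFin n w (k.val + 1)) (z : ℂ)
    (ha : ∀ i, (1 - w i * z) ≠ 0) :
    denE n s z = (∏ i, (1 - w i * z)) * ∑ i, (1 - w i * z)⁻¹ := by
  rw [den_grouped hn w s hs z, ← sumD w z, Finset.mul_sum]
  refine Finset.sum_congr rfl fun i _ => ?_
  rw [← Finset.mul_prod_erase Finset.univ _ (Finset.mem_univ i)]
  rw [mul_comm (1 - w i * z), mul_assoc, mul_inv_cancel₀ (ha i), mul_one]

lemma num_factored (hn : 1 ≤ n) (w : Fin n → ℂ) (s : Fin n → ℂ)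
    (hs : ∀ k : Fin n, s k = esymmFin n w (k.val + 1)) (z : ℂ)
    (ha : ∀ i, (1 - w i * z) ≠ 0) :
    z * numE n s z = (∏ i, (1 - w i * z)) * ((n : ℂ) - ∑ i, (1 - w i * z)⁻¹) := by
  have h1 : z * numE n s z + denE n s z = (n : ℂ) * ∏ i, (1 - w i * z) := by
    rw [num_grouped w s hs z, den_grouped hn w s hs z, prodA w z, ← Finset.sum_add_distrib,
      Finset.mul_sum]
    exact Finset.sum_congr rfl fun j _ => by ring
  have h2 := den_factored hn w s hs z ha
  have := h1
  rw [h2] at this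
  linear_combination this

lemma half_lt_re_inv {v : ℂ} (hv : ‖v‖ < 1) : 1/2 < (1 - v)⁻¹.re := by
  have hns : Complex.normSq v < 1 := by
    have := Complex.sq_norm v
    nlinarith [norm_nonneg v]
  have hne : (1 : ℂ) - v ≠ 0 := by
    intro h
    have : v = 1 := by linear_combination -h
    rw [this] at hv; simp at hv
  have hpos : 0 < Complex.normSq (1 - v) := Complex.normSq_pos.2 hne
  rw [Complex.inv_re]
  rw [div_lt_div_iff₀ (by norm_num) hpos] at *
  · simp only [Complex.sub_re, Complex.sub_im, Complex.one_re, Complex.one_im,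
      Complex.normSq_apply] at *
    nlinarith [Complex.normSq_apply v, hns]

lemma abs_sub_conj_lt {w z : ℂ} (hw : ‖w‖ < 1) (hz : ‖z‖ < 1) :
    ‖w - starRingEnd ℂ z‖ < ‖1 - w * z‖ := by
  have hw2 : Complex.normSq w < 1 := by
    have := Complex.sq_norm w; nlinarith [norm_nonneg w]
  have hz2 : Complex.normSq z < 1 := by
    have := Complex.sq_norm z; nlinarith [norm_nonneg z]
  have key : Complex.normSq (w - starRingEnd ℂ z) < Complex.normSq (1 - w * z) := by
    simp only [Complex.normSq_apply, Complex.sub_re, Complex.sub_im, Complex.one_re,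
      Complex.one_im, Complex.mul_re, Complex.mul_im, Complex.conj_re, Complex.conj_im]
    simp only [Complex.normSq_apply] at hw2 hz2
    nlinarith [hw2, hz2, sq_nonneg (w.re*z.re - w.im*z.im), sq_nonneg (w.re*z.im + w.im*z.re)]
  have h1 := Complex.sq_norm (w - starRingEnd ℂ z)
  have h2 := Complex.sq_norm (1 - w * z)
  nlinarith [norm_nonneg (w - starRingEnd ℂ z), norm_nonneg (1 - w * z)]

lemma esymm_one' (hn : 1 ≤ n) (w : Fin n → ℂ) : esymmFin n w 1 = ∑ i, w i := by
  rw [esymmFin, Finset.powersetCard_one, Finset.sum_map]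
  simp

lemma key_lemma {n : ℕ} (hn : 1 ≤ n) (w : Fin n → ℂ) (hw : ∀ i, ‖w i‖ < 1) (z : ℂ)
    (hz : ‖z‖ ≤ 1) (hz0 : z ≠ 0) (ha : ∀ i, (1:ℂ) - w i * z ≠ 0)
    (hUre : (n : ℝ)/2 < (∑ i, (1 - w i * z)⁻¹).re) :
    ‖(n : ℂ) - ∑ i, (1 - w i * z)⁻¹‖ <
      ‖z‖ * ‖∑ i, (1 - w i * z)⁻¹‖ := by
  have hne : Nonempty (Fin n) := ⟨⟨0, hn⟩⟩
  have hn1 : (1:ℝ) ≤ (n:ℝ) := by exact_mod_cast hn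
  set U : ℂ := ∑ i, (1 - w i * z)⁻¹ with hUdef
  set t : ℝ := ‖z‖ with htdef
  have ht0 : 0 < t := norm_pos_iff.mpr hz0
  refine lt_of_pow_lt_pow_left₀ 2 (by positivity) ?_
  rw [mul_pow, Complex.sq_norm ((n : ℂ) - U), Complex.sq_norm U]
  have e1 : Complex.normSq ((n : ℂ) - U) = ((n:ℝ) - U.re)^2 + U.im^2 := by
    rw [Complex.normSq_apply]
    simp only [Complex.sub_re, Complex.sub_im, Complex.natCast_re, Complex.natCast_im, zero_sub]
    ring
  have e2 : Complex.normSq U = U.re^2 + U.im^2 := by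
    rw [Complex.normSq_apply]; ring
  rw [e1, e2]
  have ht2 : ‖z‖ ^ 2 = t^2 := by rw [htdef]
  rw [ht2]
  rcases lt_or_eq_of_le hz with ht1 | ht1
  · -- t < 1
    have hones : 0 < 1 - t^2 := by nlinarith
    have hterm : ∀ i : Fin n,
        ‖((1 - t^2 : ℝ) : ℂ) * (1 - w i * z)⁻¹ - 1‖ < t := by
      intro i
      have hns : (t^2 : ℝ) = Complex.normSq z := by rw [← Complex.sq_norm]
      have hcast : ((1 - t^2 : ℝ) : ℂ) = 1 - z * (starRingEnd ℂ z) := by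
        rw [Complex.mul_conj, hns]
        push_cast
        ring
      have hid : ((1 - t^2 : ℝ) : ℂ) * (1 - w i * z)⁻¹ - 1
          = (z * (w i - starRingEnd ℂ z)) * (1 - w i * z)⁻¹ := by
        have step : ((1 - t^2 : ℝ) : ℂ) * (1 - w i * z)⁻¹ - 1
            = (((1 - t^2 : ℝ) : ℂ) - (1 - w i * z)) * (1 - w i * z)⁻¹ := by
          rw [sub_mul, mul_inv_cancel₀ (ha i)]
        rw [step]
        congr 1
        rw [hcast]
        ring
      rw [hid, norm_mul, norm_mul, norm_inv]
      have hlt := abs_sub_conj_lt (hw i) (show ‖z‖ < 1 from ht1)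
      have hapos : 0 < ‖1 - w i * z‖ := norm_pos_iff.mpr (ha i)
      have hfrac : ‖w i - starRingEnd ℂ z‖ * (‖1 - w i * z‖)⁻¹ < 1 := by
        rw [← div_eq_mul_inv, div_lt_one hapos]
        exact hlt
      calc ‖z‖ * ‖w i - starRingEnd ℂ z‖ * (‖1 - w i * z‖)⁻¹
          = t * (‖w i - starRingEnd ℂ z‖ * (‖1 - w i * z‖)⁻¹) := by
            rw [htdef]; ring
        _ < t * 1 := (mul_lt_mul_iff_right₀ ht0).2 hfrac
        _ = t := mul_one t
    have hrepr : ((1 - t^2 : ℝ):ℂ) * U - (n : ℂ)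
        = ∑ i, (((1 - t^2 : ℝ):ℂ) * (1 - w i * z)⁻¹ - 1) := by
      rw [Finset.sum_sub_distrib, ← Finset.mul_sum, ← hUdef, Finset.sum_const, Finset.card_univ,
        Fintype.card_fin, nsmul_eq_mul, mul_one]
    have hsum : ‖((1 - t^2 : ℝ):ℂ) * U - (n : ℂ)‖ < n * t := by
      rw [hrepr]
      calc ‖∑ i, (((1 - t^2 : ℝ):ℂ) * (1 - w i * z)⁻¹ - 1)‖
          ≤ ∑ i, ‖((1 - t^2 : ℝ):ℂ) * (1 - w i * z)⁻¹ - 1‖ :=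
            norm_sum_le _ _
        _ < ∑ _i : Fin n, t := Finset.sum_lt_sum_of_nonempty Finset.univ_nonempty
            fun i _ => hterm i
        _ = n * t := by rw [Finset.sum_const, Finset.card_univ, Fintype.card_fin, nsmul_eq_mul]
    have hsq : ((1-t^2)*U.re - n)^2 + ((1-t^2)*U.im)^2 < (n*t)^2 := by
      have e3 : ‖((1 - t^2 : ℝ):ℂ) * U - (n : ℂ)‖ ^ 2
          = ((1-t^2)*U.re - n)^2 + ((1-t^2)*U.im)^2 := by
        rw [Complex.sq_norm, Complex.normSq_apply]
        simp only [Complex.sub_re, Complex.sub_im, Complex.mul_re, Complex.mul_im,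
          Complex.ofReal_re, Complex.ofReal_im, Complex.natCast_re, Complex.natCast_im]
        ring
      nlinarith [norm_nonneg (((1 - t^2 : ℝ):ℂ) * U - (n : ℂ)), hsum, e3,
        mul_pos (mul_pos (by positivity : (0:ℝ) < (n:ℝ)) ht0) ht0]
    nlinarith [hsq, hones, sq_nonneg U.im]
  · -- t = 1
    rw [ht1]
    nlinarith [hUre, hn1, sq_nonneg U.im]


lemma costara_lt (hn : 1 ≤ n) (w : Fin n → ℂ) (hw : ∀ i, ‖w i‖ < 1)
    (s : Fin n → ℂ) (hs : ∀ k : Fin n, s k = esymmFin n w (k.val + 1))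
    (z : ℂ) (hz : ‖z‖ ≤ 1) :
    ‖numE n s z‖ < ‖denE n s z‖ := by
  have hne : Nonempty (Fin n) := ⟨⟨0, hn⟩⟩
  have hwz : ∀ i, ‖w i * z‖ < 1 := by
    intro i
    rw [norm_mul]
    calc ‖w i‖ * ‖z‖ ≤ ‖w i‖ * 1 :=
          mul_le_mul_of_nonneg_left hz (norm_nonneg _)
      _ = ‖w i‖ := mul_one _
      _ < 1 := hw i
  have ha : ∀ i, (1 : ℂ) - w i * z ≠ 0 := by
    intro i h
    have h1 : w i * z = 1 := by linear_combination -h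
    have h2 := hwz i
    rw [h1] at h2
    simp at h2
  have hre : ∀ i, 1/2 < ((1 - w i * z)⁻¹).re := fun i => half_lt_re_inv (hwz i)
  set U : ℂ := ∑ i, (1 - w i * z)⁻¹ with hUdef
  set A : ℂ := ∏ i, (1 - w i * z) with hAdef
  have hUre : (n : ℝ)/2 < U.re := by
    have : U.re = ∑ i, ((1 - w i * z)⁻¹).re := by rw [hUdef, Complex.re_sum]
    rw [this]
    calc (n : ℝ)/2 = ∑ _i : Fin n, (1/2 : ℝ) := by
          rw [Finset.sum_const, Finset.card_univ, Fintype.card_fin, nsmul_eq_mul]; ring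
      _ < _ := Finset.sum_lt_sum_of_nonempty Finset.univ_nonempty fun i _ => hre i
  have hn1 : (1:ℝ) ≤ (n:ℝ) := by exact_mod_cast hn
  have hU : U ≠ 0 := by
    intro h
    rw [h] at hUre
    simp at hUre
    linarith
  have hA : A ≠ 0 := Finset.prod_ne_zero_iff.2 fun i _ => ha i
  have hden : denE n s z = A * U := den_factored hn w s hs z ha
  have hdabs : ‖denE n s z‖ = ‖A‖ * ‖U‖ := by
    rw [hden, norm_mul]
  by_cases hz0 : z = 0
  · subst hz0
    have hnum0 : numE n s 0 = -(s ⟨0, hn⟩) := by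
      rw [numE, Finset.sum_eq_single (⟨0, hn⟩ : Fin n)]
      · norm_num
      · intro k _ hk
        have : k.val ≠ 0 := fun h => hk (Fin.ext h)
        rw [zero_pow this, mul_zero]
      · simp
    have hden0 : denE n s 0 = (n : ℂ) := by
      rw [denE]
      have : ∀ k : Fin n, (if k.val + 1 ≤ n - 1 then
          (-1 : ℂ)^(k.val + 1) * ((n : ℂ) - ((k.val + 1 : ℕ) : ℂ)) * s k * 0^(k.val + 1) else 0) = 0 := by
        intro k
        split
        · rw [zero_pow (Nat.succ_ne_zero _), mul_zero]
        · rfl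
      rw [Finset.sum_congr rfl fun k _ => this k]
      simp
    rw [hnum0, hden0, norm_neg, Complex.norm_natCast]
    have hs0 : s ⟨0, hn⟩ = ∑ i, w i := by rw [hs, esymm_one' hn]
    rw [hs0]
    calc ‖∑ i, w i‖ ≤ ∑ i, ‖w i‖ := norm_sum_le _ _
      _ < ∑ _i : Fin n, (1:ℝ) := Finset.sum_lt_sum_of_nonempty Finset.univ_nonempty fun i _ => hw i
      _ = n := by simp
  · -- z ≠ 0
    have hznum : z * numE n s z = A * ((n : ℂ) - U) := num_factored hn w s hs z ha
    have htpos : 0 < ‖z‖ := norm_pos_iff.mpr hz0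
    have key : ‖(n : ℂ) - U‖ < ‖z‖ * ‖U‖ :=
      key_lemma hn w hw z hz hz0 ha hUre
    have h1 : ‖z‖ * ‖numE n s z‖ = ‖A‖ * ‖(n:ℂ) - U‖ := by
      rw [← norm_mul, ← norm_mul, hznum]
    have h2 : ‖A‖ * ‖(n:ℂ) - U‖ <
        ‖z‖ * (‖A‖ * ‖U‖) := by
      have hApos : 0 < ‖A‖ := norm_pos_iff.mpr hA
      calc ‖A‖ * ‖(n:ℂ) - U‖
          < ‖A‖ * (‖z‖ * ‖U‖) :=
            (mul_lt_mul_iff_right₀ hApos).2 key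
        _ = ‖z‖ * (‖A‖ * ‖U‖) := by ring
    rw [hdabs]
    have := h1 ▸ h2
    exact lt_of_mul_lt_mul_left this (le_of_lt htpos)

end CostaraAux

/-- Schwarz lemma for `Gₙ` via the Costara function: here `s : Fin n → ℂ` encodes
`(s₁,…,s_{n−1},p)` with `p = s (n-1)`. -/
theorem schwarz_lemma_costara (n : ℕ) (hn : 2 ≤ n) (ψ : ℂ → (Fin n → ℂ))
    (hψ : DifferentiableOn ℂ ψ (Metric.ball (0 : ℂ) 1))
    (hmap : ∀ lam ∈ Metric.ball (0 : ℂ) 1, inSymmPolydisc n 1 (ψ lam))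
    (hzero : ψ 0 = 0)
    (lam₀ : ℂ) (hlam₀ : lam₀ ∈ Metric.ball (0 : ℂ) 1) (hlam₀' : lam₀ ≠ 0)
    (s : Fin n → ℂ) (hval : ψ lam₀ = s) :
    ∀ z : ℂ, ‖z‖ ≤ 1 →
      ‖(∑ k : Fin n,
          (-1 : ℂ)^(k.val + 1) * ((k.val + 1 : ℕ) : ℂ) * s k * z^(k.val)) /
        ((n : ℂ) + ∑ k : Fin n,
          if k.val + 1 ≤ n - 1 then
            (-1 : ℂ)^(k.val + 1) * ((n : ℂ) - ((k.val + 1 : ℕ) : ℂ)) * s k * z^(k.val + 1)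
          else 0)‖ ≤ ‖lam₀‖ := by
  intro z hzle
  have hn1 : 1 ≤ n := by omega
  have hgoal : (∑ k : Fin n,
          (-1 : ℂ)^(k.val + 1) * ((k.val + 1 : ℕ) : ℂ) * s k * z^(k.val)) /
        ((n : ℂ) + ∑ k : Fin n,
          if k.val + 1 ≤ n - 1 then
            (-1 : ℂ)^(k.val + 1) * ((n : ℂ) - ((k.val + 1 : ℕ) : ℂ)) * s k * z^(k.val + 1)
          else 0) = numE n s z / denE n s z := rfl
  rw [hgoal]
  set F : ℂ → ℂ := fun lam => numE n (ψ lam) z / denE n (ψ lam) z with hFdef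
  have hb : ∀ lam ∈ Metric.ball (0:ℂ) 1,
      ‖numE n (ψ lam) z‖ < ‖denE n (ψ lam) z‖ := by
    intro lam hlam
    obtain ⟨w, hw, hsw⟩ := hmap lam hlam
    exact costara_lt hn1 w hw _ hsw z hzle
  have hdne : ∀ lam ∈ Metric.ball (0:ℂ) 1, denE n (ψ lam) z ≠ 0 := by
    intro lam hlam h0
    have := hb lam hlam
    rw [h0] at this
    simp at this
    exact absurd this (not_lt.2 (norm_nonneg _))
  have hcomp : ∀ k : Fin n, DifferentiableOn ℂ (fun lam => ψ lam k) (Metric.ball (0:ℂ) 1) :=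
    differentiableOn_pi.1 hψ
  have hnumd : DifferentiableOn ℂ (fun lam => numE n (ψ lam) z) (Metric.ball (0:ℂ) 1) := by
    apply DifferentiableOn.fun_sum
    intro k _
    exact ((hcomp k).const_mul ((-1 : ℂ)^(k.val + 1) * ((k.val + 1 : ℕ) : ℂ))).mul_const
      (z^(k.val))
  have hdend : DifferentiableOn ℂ (fun lam => denE n (ψ lam) z) (Metric.ball (0:ℂ) 1) := by
    apply DifferentiableOn.const_add
    apply DifferentiableOn.fun_sum
    intro k _
    by_cases hk : k.val + 1 ≤ n - 1
    · simp only [if_pos hk]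
      exact ((hcomp k).const_mul ((-1 : ℂ)^(k.val + 1) * ((n : ℂ) - ((k.val + 1 : ℕ) : ℂ)))).mul_const
        (z^(k.val + 1))
    · simp only [if_neg hk]
      exact differentiableOn_const 0
  have hFd : DifferentiableOn ℂ F (Metric.ball (0:ℂ) 1) := hnumd.div hdend hdne
  have hFmaps : Set.MapsTo F (Metric.ball (0:ℂ) 1) (Metric.ball (0:ℂ) 1) := by
    intro lam hlam
    rw [Metric.mem_ball, dist_zero_right]
    show ‖numE n (ψ lam) z / denE n (ψ lam) z‖ < 1
    rw [norm_div]
    rw [div_lt_one (lt_of_le_of_lt (norm_nonneg _) (hb lam hlam))]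
    exact hb lam hlam
  have hF0 : F 0 = 0 := by
    show numE n (ψ 0) z / denE n (ψ 0) z = 0
    rw [hzero]
    have : numE n (0 : Fin n → ℂ) z = 0 := by
      rw [numE]
      apply Finset.sum_eq_zero
      intro k _
      simp
    rw [this, zero_div]
  have hlam0lt : ‖lam₀‖ < 1 := by
    rw [Metric.mem_ball, dist_zero_right] at hlam₀
    exact hlam₀
  have := Complex.norm_le_norm_of_mapsTo_ball hFd (hFmaps.mono_right Metric.ball_subset_closedBall) hF0 hlam0lt
  have hFlam : F lam₀ = numE n s z / denE n s z := by
    show numE n (ψ lam₀) z / denE n (ψ lam₀) z = _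
    rw [hval]
  rw [hFlam] at this
  exact this
end
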